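/- There exists a constant C, independent of ε and N, such that ‖∇(u − u^I)‖_{L^1(Ω_s)} ≤ C N^{-1}, where the gradient of the piecewise bilinear interpolant is taken rectangle-by-rectangle. -/

import Mathlib

open MeasureTheory Real Set

set_option maxHeartbeats 1000000

noncomputable section

/-- First-order partial derivative in the x-direction. -/
def pdx (f : ℝ × ℝ → ℝ) : ℝ × ℝ → ℝ := fun p => fderiv ℝ f p (1, 0)

/-- First-order partial derivative in the y-direction. -/
def pdy (f : ℝ × ℝ → ℝ) : ℝ × ℝ → ℝ := fun p => fderiv ℝ f p (0, 1)

/-- Mixed partial derivative `∂_x^i ∂_y^j`. -/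
def pd (i j : ℕ) (f : ℝ × ℝ → ℝ) : ℝ × ℝ → ℝ := pdx^[i] (pdy^[j] f)

/-- A function coincides with a bilinear polynomial `a + bx + cy + dxy` on a set. -/
def IsBilinearOn (f : ℝ × ℝ → ℝ) (s : Set (ℝ × ℝ)) : Prop :=
  ∃ a b c d : ℝ, ∀ p ∈ s, f p = a + b * p.1 + c * p.2 + d * (p.1 * p.2)

/-- The Shishkin-mesh node abscissas. -/
def meshX (N : ℕ) (lx : ℝ) (i : ℕ) : ℝ :=
  if i ≤ N / 2 then 2 * (i : ℝ) * (1 - lx) / (N : ℝ)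
  else 1 - 2 * ((N : ℝ) - (i : ℝ)) * lx / (N : ℝ)

/-- The Shishkin-mesh node ordinates. -/
def meshY (N : ℕ) (ly : ℝ) (j : ℕ) : ℝ :=
  if j ≤ N / 3 then 3 * (j : ℝ) * ly / (N : ℝ)
  else if j ≤ 2 * N / 3 then
    (3 * (j : ℝ) / (N : ℝ) - 1) - 3 * (2 * (j : ℝ) - (N : ℝ)) * ly / (N : ℝ)
  else 1 - 3 * ((N : ℝ) - (j : ℝ)) * ly / (N : ℝ)

/-- The mesh rectangle `τ_{ij} = [x_{i-1}, x_i] × [y_{j-1}, y_j]`. -/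
def meshRect (N : ℕ) (lx ly : ℝ) (i j : ℕ) : Set (ℝ × ℝ) :=
  Icc (meshX N lx (i - 1)) (meshX N lx i) ×ˢ Icc (meshY N ly (j - 1)) (meshY N ly j)

def OmegaS (lx ly : ℝ) : Set (ℝ × ℝ) := Icc 0 (1 - lx) ×ˢ Icc ly (1 - ly)
def Omega1R (lx ly : ℝ) : Set (ℝ × ℝ) := Icc (1 - lx) 1 ×ˢ Icc ly (1 - ly)
def Omega2R (lx ly : ℝ) : Set (ℝ × ℝ) := Icc 0 (1 - lx) ×ˢ (Icc 0 ly ∪ Icc (1 - ly) 1)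
def Omega12R (lx ly : ℝ) : Set (ℝ × ℝ) := Icc (1 - lx) 1 ×ˢ (Icc 0 ly ∪ Icc (1 - ly) 1)

/-- Basic assumptions on the Shishkin mesh data (with `ρ = 2.5`). -/
def ShishkinHyp (N : ℕ) (ε β lx ly : ℝ) : Prop :=
  0 < N ∧ 6 ∣ N ∧ 0 < ε ∧ ε ≤ (N : ℝ)⁻¹ ∧ 0 < β ∧
  lx = 2.5 * ε / β * Real.log (N : ℝ) ∧ ly = 2.5 * Real.sqrt ε * Real.log (N : ℝ) ∧
  lx ≤ 1 / 2 ∧ ly ≤ 1 / 4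

/-- `gI` is the piecewise-bilinear nodal interpolant of `g` on the Shishkin mesh. -/
def IsMeshInterpolant (N : ℕ) (lx ly : ℝ) (g gI : ℝ × ℝ → ℝ) : Prop :=
  Continuous gI ∧
  (∀ i j : ℕ, 1 ≤ i → i ≤ N → 1 ≤ j → j ≤ N → IsBilinearOn gI (meshRect N lx ly i j)) ∧
  (∀ i j : ℕ, i ≤ N → j ≤ N →
    gI (meshX N lx i, meshY N ly j) = g (meshX N lx i, meshY N ly j))

def UnitSq : Set (ℝ × ℝ) := Icc 0 1 ×ˢ Icc 0 1

/-- Bounds on the regular part `S` of the solution decomposition. -/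
def BoundS (C0 : ℝ) (S : ℝ × ℝ → ℝ) : Prop :=
  ContDiff ℝ 3 S ∧ ∀ i j : ℕ, i + j ≤ 3 → ∀ p ∈ UnitSq, |pd i j S p| ≤ C0

/-- Bounds on the exponential-layer part `E₁`. -/
def BoundE1 (ε β C0 : ℝ) (E1 : ℝ × ℝ → ℝ) : Prop :=
  ContDiff ℝ 3 E1 ∧ ∀ i j : ℕ, i + j ≤ 3 → ∀ p ∈ UnitSq,
    |pd i j E1 p| ≤ C0 * ε ^ (-(i : ℝ)) * Real.exp (-β * (1 - p.1) / ε)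

/-- Bounds on the characteristic-layer part `E₂`. -/
def BoundE2 (ε C0 : ℝ) (E2 : ℝ × ℝ → ℝ) : Prop :=
  ContDiff ℝ 3 E2 ∧ ∀ i j : ℕ, i + j ≤ 3 → ∀ p ∈ UnitSq,
    |pd i j E2 p| ≤ C0 * ε ^ (-(j : ℝ) / 2) *
      (Real.exp (-p.2 / Real.sqrt ε) + Real.exp (-(1 - p.2) / Real.sqrt ε))

/-- Bounds on the corner-layer part `E₁₂`. -/
def BoundE12 (ε β C0 : ℝ) (E12 : ℝ × ℝ → ℝ) : Prop :=
  ContDiff ℝ 3 E12 ∧ ∀ i j : ℕ, i + j ≤ 3 → ∀ p ∈ UnitSq,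
    |pd i j E12 p| ≤ C0 * ε ^ (-((i : ℝ) + (j : ℝ) / 2)) * Real.exp (-β * (1 - p.1) / ε) *
      (Real.exp (-p.2 / Real.sqrt ε) + Real.exp (-(1 - p.2) / Real.sqrt ε))

/-- Membership in the bilinear finite element space `V^N`. -/
def MemVN (N : ℕ) (lx ly : ℝ) (v : ℝ × ℝ → ℝ) : Prop :=
  Continuous v ∧
  (∀ p ∈ UnitSq, (p.1 = 0 ∨ p.1 = 1 ∨ p.2 = 0 ∨ p.2 = 1) → v p = 0) ∧
  ∀ i j : ℕ, 1 ≤ i → i ≤ N → 1 ≤ j → j ≤ N → IsBilinearOn v (meshRect N lx ly i j)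

/-- The SDFEM stabilization parameter `δ`. -/
def sdDelta (N : ℕ) (lx ly Cstar : ℝ) : ℝ × ℝ → ℝ :=
  (OmegaS lx ly ∪ Omega2R lx ly).indicator fun _ => Cstar / (N : ℝ)

/-- The SDFEM bilinear form `B`. -/
def Bform (N : ℕ) (lx ly ε b c Cstar : ℝ) (v w : ℝ × ℝ → ℝ) : ℝ :=
  ∫ p in UnitSq,
    (ε * (pdx v p * pdx w p + pdy v p * pdy w p)
      + (b * pdx v p + c * v p) * w p
      + (b * pdx v p + c * v p) * (sdDelta N lx ly Cstar p * (b * pdx w p)))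

/-- The square of the SDFEM energy norm `|||·|||`. -/
def energySq (N : ℕ) (lx ly ε b c Cstar : ℝ) (v : ℝ × ℝ → ℝ) : ℝ :=
  ∫ p in UnitSq,
    ((ε + b ^ 2 * sdDelta N lx ly Cstar p) * pdx v p ^ 2
      + ε * pdy v p ^ 2 + c * v p ^ 2)

/-- The neighbourhood `Ω₀` of the point `(xs, ys)`. -/
def OmegaZero (N : ℕ) (xs ys K sx sy : ℝ) : Set (ℝ × ℝ) :=
  {p : ℝ × ℝ | p ∈ Ioo (0 : ℝ) 1 ×ˢ Ioo (0 : ℝ) 1 ∧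
    p.1 - xs ≤ K * sx * Real.log (N : ℝ) ∧ |p.2 - ys| ≤ K * sy * Real.log (N : ℝ)}

/-- `Ω₀'`: the smallest union of mesh rectangles containing `Ω₀`. -/
def OmegaZero' (N : ℕ) (lx ly xs ys K sx sy : ℝ) : Set (ℝ × ℝ) :=
  ⋃ i ∈ Finset.Icc 1 N, ⋃ j ∈ Finset.Icc 1 N,
    ⋃ (_ : volume (OmegaZero N xs ys K sx sy ∩ meshRect N lx ly i j) ≠ 0),
      meshRect N lx ly i j

lemma pd10 (f : ℝ × ℝ → ℝ) : pd 1 0 f = pdx f := by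
  simp [pd]
lemma pd01 (f : ℝ × ℝ → ℝ) : pd 0 1 f = pdy f := by
  simp [pd]
lemma pd20 (f : ℝ × ℝ → ℝ) : pd 2 0 f = pdx (pdx f) := by
  simp [pd, Function.iterate_succ_apply']
lemma pd11 (f : ℝ × ℝ → ℝ) : pd 1 1 f = pdx (pdy f) := by
  simp [pd]
lemma pd02 (f : ℝ × ℝ → ℝ) : pd 0 2 f = pdy (pdy f) := by
  simp [pd, Function.iterate_succ_apply']

lemma contDiff_pdx {f : ℝ × ℝ → ℝ} (hf : ContDiff ℝ 3 f) : ContDiff ℝ 2 (pdx f) :=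
  (hf.fderiv_right (by norm_num)).clm_apply contDiff_const
lemma contDiff_pdy {f : ℝ × ℝ → ℝ} (hf : ContDiff ℝ 3 f) : ContDiff ℝ 2 (pdy f) :=
  (hf.fderiv_right (by norm_num)).clm_apply contDiff_const

/-- slice derivative in x -/
lemma hasDerivAt_sliceX {f : ℝ × ℝ → ℝ} {t y : ℝ} (hf : DifferentiableAt ℝ f (t, y)) :
    HasDerivAt (fun s => f (s, y)) (pdx f (t, y)) t := by
  have h1 : HasDerivAt (fun s : ℝ => (s, y)) ((1 : ℝ), (0 : ℝ)) t :=
    (hasDerivAt_id t).prodMk (hasDerivAt_const t y)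
  exact (hf.hasFDerivAt.comp_hasDerivAt t h1)

lemma hasDerivAt_sliceY {f : ℝ × ℝ → ℝ} {x s : ℝ} (hf : DifferentiableAt ℝ f (x, s)) :
    HasDerivAt (fun t => f (x, t)) (pdy f (x, s)) s := by
  have h1 : HasDerivAt (fun t : ℝ => (x, t)) ((0 : ℝ), (1 : ℝ)) s :=
    (hasDerivAt_const s x).prodMk (hasDerivAt_id s)
  exact (hf.hasFDerivAt.comp_hasDerivAt s h1)

/-- FTC-based bound on increments. -/
lemma incr_bound {φ φ' M : ℝ → ℝ} {a b : ℝ} (hab : a ≤ b)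
    (hd : ∀ t, HasDerivAt φ (φ' t) t) (hc : Continuous φ') (hM : Continuous M)
    (hb : ∀ t ∈ Icc a b, |φ' t| ≤ M t) :
    |φ b - φ a| ≤ ∫ t in a..b, M t := by
  have hint : ∀ c d : ℝ, IntervalIntegrable φ' volume c d := fun c d => hc.intervalIntegrable c d
  have heq : φ b - φ a = ∫ t in a..b, φ' t :=
    (intervalIntegral.integral_eq_sub_of_hasDerivAt (fun t _ => hd t) (hint a b)).symm
  rw [heq]
  calc |∫ t in a..b, φ' t| ≤ ∫ t in a..b, |φ' t| := by
        simpa [hab] using intervalIntegral.abs_integral_le_integral_abs hab (f := φ')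
    _ ≤ ∫ t in a..b, M t := by
        apply intervalIntegral.integral_mono_on hab (hc.abs.intervalIntegrable a b)
          (hM.intervalIntegrable a b)
        intro t ht; exact hb t ht

/-- constant-bound corollary -/
lemma incr_bound_const {φ φ' : ℝ → ℝ} {a b C : ℝ} (hab : a ≤ b)
    (hd : ∀ t, HasDerivAt φ (φ' t) t) (hc : Continuous φ') 
    (hb : ∀ t ∈ Icc a b, |φ' t| ≤ C) :
    |φ b - φ a| ≤ C * (b - a) := by
  have := incr_bound hab hd hc continuous_const hb
  simpa [intervalIntegral.integral_const, smul_eq_mul, mul_comm] using this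

/-- exponential integral, x-layer -/
lemma contExpX (β ε : ℝ) : Continuous fun tt : ℝ => Real.exp (-β * (1 - tt) / ε) :=
  Real.continuous_exp.comp
    ((continuous_const.mul (continuous_const.sub continuous_id)).div_const ε)

lemma contExpY (σ : ℝ) :
    Continuous fun s : ℝ => Real.exp (-s / σ) + Real.exp (-(1 - s) / σ) :=
  (Real.continuous_exp.comp (continuous_id.neg.div_const σ)).add
    (Real.continuous_exp.comp ((continuous_const.sub continuous_id).neg.div_const σ))

lemma expInt1 {ε β a b : ℝ} (hε : 0 < ε) (hβ : 0 < β) :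
    ∫ t in a..b, ε⁻¹ * Real.exp (-β * (1 - t) / ε)
      = β⁻¹ * Real.exp (-β * (1 - b) / ε) - β⁻¹ * Real.exp (-β * (1 - a) / ε) := by
  have hd : ∀ t : ℝ, HasDerivAt (fun t => β⁻¹ * Real.exp (-β * (1 - t) / ε))
      (ε⁻¹ * Real.exp (-β * (1 - t) / ε)) t := by
    intro t
    have h1 : HasDerivAt (fun t : ℝ => -β * (1 - t) / ε) (β / ε) t := by
      have : HasDerivAt (fun t : ℝ => -β * (1 - t) / ε) (-β * (0 - 1) / ε) t := by
        exact (((hasDerivAt_const t (1:ℝ)).sub (hasDerivAt_id t)).const_mul (-β)).div_const ε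
      simpa using this
    have h2 := (h1.exp).const_mul β⁻¹
    refine h2.congr_deriv ?_
    field_simp
  rw [intervalIntegral.integral_eq_sub_of_hasDerivAt (fun t _ => hd t)
    (Continuous.intervalIntegrable (continuous_const.mul (contExpX β ε)) a b)]

/-- exponential integral, y-layers -/
lemma expInt2 {σ a b : ℝ} (hσ : 0 < σ) :
    ∫ s in a..b, σ⁻¹ * (Real.exp (-s / σ) + Real.exp (-(1 - s) / σ))
      = (Real.exp (-a / σ) - Real.exp (-b / σ))
        + (Real.exp (-(1 - b) / σ) - Real.exp (-(1 - a) / σ)) := by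
  have hd : ∀ s : ℝ, HasDerivAt (fun s => -Real.exp (-s / σ) + Real.exp (-(1 - s) / σ))
      (σ⁻¹ * (Real.exp (-s / σ) + Real.exp (-(1 - s) / σ))) s := by
    intro s
    have h1 : HasDerivAt (fun s : ℝ => -s / σ) (-1 / σ) s := by
      simpa using ((hasDerivAt_id s).neg.div_const σ)
    have h2 : HasDerivAt (fun s : ℝ => -(1 - s) / σ) (1 / σ) s := by
      have : HasDerivAt (fun s : ℝ => -(1 - s) / σ) (-(0 - 1) / σ) s :=
        (((hasDerivAt_const s (1:ℝ)).sub (hasDerivAt_id s)).neg).div_const σ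
      simpa using this
    have := ((h1.exp).const_mul (-1 : ℝ)).add (h2.exp)
    have h3 : HasDerivAt (fun s => -Real.exp (-s / σ) + Real.exp (-(1 - s) / σ))
        (-1 * (Real.exp (-s / σ) * (-1 / σ)) + Real.exp (-(1 - s) / σ) * (1 / σ)) s := by
      simp only [neg_one_mul] at this ⊢; exact this
    convert h3 using 1
    field_simp
  rw [intervalIntegral.integral_eq_sub_of_hasDerivAt (fun s _ => hd s)
    (Continuous.intervalIntegrable (continuous_const.mul (contExpY σ)) a b)]
  ring

lemma comb_abs_le {s A D0 D1 B : ℝ} (hs : 0 ≤ s) (hs1 : s ≤ 1)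
    (h0 : |A - D0| ≤ B) (h1 : |A - D1| ≤ B) :
    |A - ((1 - s) * D0 + s * D1)| ≤ B := by
  have he : A - ((1 - s) * D0 + s * D1) = (1 - s) * (A - D0) + s * (A - D1) := by ring
  rw [he]
  refine (abs_add_le _ _).trans ?_
  rw [abs_mul, abs_mul, abs_of_nonneg (by linarith : (0:ℝ) ≤ 1 - s), abs_of_nonneg hs]
  nlinarith [abs_nonneg (A - D0), abs_nonneg (A - D1)]

lemma comb_abs_le' {s D0 D1 B : ℝ} (hs : 0 ≤ s) (hs1 : s ≤ 1)
    (h0 : |D0| ≤ B) (h1 : |D1| ≤ B) :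
    |(1 - s) * D0 + s * D1| ≤ B := by
  have h := comb_abs_le (A := 0) hs hs1 (by simpa using h0) (by simpa using h1)
  rw [zero_sub, abs_neg] at h
  exact h

lemma bilinear_deriv {uI : ℝ × ℝ → ℝ} {X0 X1 Y0 Y1 : ℝ} (hx : X0 < X1) (hy : Y0 < Y1)
    (hbil : IsBilinearOn uI (Icc X0 X1 ×ˢ Icc Y0 Y1)) {p : ℝ × ℝ}
    (hp : p ∈ Ioo X0 X1 ×ˢ Ioo Y0 Y1) :
    DifferentiableAt ℝ uI p ∧
    pdx uI p = (1 - (p.2 - Y0) / (Y1 - Y0)) * ((uI (X1, Y0) - uI (X0, Y0)) / (X1 - X0))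
             + ((p.2 - Y0) / (Y1 - Y0)) * ((uI (X1, Y1) - uI (X0, Y1)) / (X1 - X0)) ∧
    pdy uI p = (1 - (p.1 - X0) / (X1 - X0)) * ((uI (X0, Y1) - uI (X0, Y0)) / (Y1 - Y0))
             + ((p.1 - X0) / (X1 - X0)) * ((uI (X1, Y1) - uI (X1, Y0)) / (Y1 - Y0)) := by
  obtain ⟨a, b, c, d, heq⟩ := hbil
  set P : ℝ × ℝ → ℝ := fun q => a + b * q.1 + c * q.2 + d * (q.1 * q.2) with hP
  have hPd : Differentiable ℝ P := by
    apply Differentiable.add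
    apply Differentiable.add
    apply Differentiable.add
    · exact differentiable_const a
    · exact differentiable_fst.const_mul b
    · exact differentiable_snd.const_mul c
    · exact (differentiable_fst.mul differentiable_snd).const_mul d
  have hopen : IsOpen (Ioo X0 X1 ×ˢ Ioo Y0 Y1) := isOpen_Ioo.prod isOpen_Ioo
  have hev : uI =ᶠ[nhds p] P :=
    Filter.eventuallyEq_of_mem (hopen.mem_nhds hp)
      (fun q hq => heq q ⟨Ioo_subset_Icc_self hq.1, Ioo_subset_Icc_self hq.2⟩)
  have hdiff : DifferentiableAt ℝ uI p := ((hPd p).congr_of_eventuallyEq hev)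
  have hfd : fderiv ℝ uI p = fderiv ℝ P p := hev.fderiv_eq
  -- compute pdx P p
  have hPx : pdx P p = b + d * p.2 := by
    have h1 : HasDerivAt (fun s => P (s, p.2)) (pdx P (p.1, p.2)) p.1 :=
      hasDerivAt_sliceX (hPd _)
    have h2 : HasDerivAt (fun s => a + b * s + c * p.2 + d * (s * p.2))
        (b * 1 + d * (1 * p.2)) p.1 := by
      exact ((((hasDerivAt_id p.1).const_mul b).const_add a).add_const (c * p.2)).add
        (((hasDerivAt_id p.1).mul_const p.2).const_mul d)
    have h2' : HasDerivAt (fun s => P (s, p.2)) (b + d * p.2) p.1 := by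
      simpa [hP] using h2
    have := h1.unique h2'
    simpa [Prod.mk.eta] using this
  have hPy : pdy P p = c + d * p.1 := by
    have h1 : HasDerivAt (fun t => P (p.1, t)) (pdy P (p.1, p.2)) p.2 :=
      hasDerivAt_sliceY (hPd _)
    have h2 : HasDerivAt (fun t => a + b * p.1 + c * t + d * (p.1 * t))
        (c * 1 + d * (p.1 * 1)) p.2 :=
      (((hasDerivAt_id p.2).const_mul c).const_add (a + b * p.1)).add
        (((hasDerivAt_id p.2).const_mul p.1).const_mul d)
    have h2' : HasDerivAt (fun t => P (p.1, t)) (c + d * p.1) p.2 := by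
      simpa [hP] using h2
    have := h1.unique h2'
    simpa [Prod.mk.eta] using this
  have hcor : ∀ X Y, X ∈ Icc X0 X1 → Y ∈ Icc Y0 Y1 →
      uI (X, Y) = a + b * X + c * Y + d * (X * Y) := by
    intro X Y hX hY
    exact heq (X, Y) ⟨hX, hY⟩
  have hX0 : X0 ∈ Icc X0 X1 := ⟨le_refl _, hx.le⟩
  have hX1 : X1 ∈ Icc X0 X1 := ⟨hx.le, le_refl _⟩
  have hY0 : Y0 ∈ Icc Y0 Y1 := ⟨le_refl _, hy.le⟩
  have hY1 : Y1 ∈ Icc Y0 Y1 := ⟨hy.le, le_refl _⟩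
  have hxne : X1 - X0 ≠ 0 := sub_ne_zero.mpr hx.ne'
  have hyne : Y1 - Y0 ≠ 0 := sub_ne_zero.mpr hy.ne'
  refine ⟨hdiff, ?_, ?_⟩
  · have : pdx uI p = b + d * p.2 := by
      rw [pdx] at hPx ⊢
      rw [hfd]; exact hPx
    rw [this, hcor X1 Y0 hX1 hY0, hcor X0 Y0 hX0 hY0, hcor X1 Y1 hX1 hY1,
      hcor X0 Y1 hX0 hY1]
    field_simp
    ring
  · have : pdy uI p = c + d * p.1 := by
      rw [pdy] at hPy ⊢
      rw [hfd]; exact hPy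
    rw [this, hcor X0 Y1 hX0 hY1, hcor X0 Y0 hX0 hY0, hcor X1 Y1 hX1 hY1,
      hcor X1 Y0 hX1 hY0]
    field_simp
    ring



lemma mvt_two_points {φ φ' : ℝ → ℝ} {a b C : ℝ}
    (hd : ∀ t, HasDerivAt φ (φ' t) t) (hc : Continuous φ')
    (hb : ∀ t ∈ Icc a b, |φ' t| ≤ C) {c d : ℝ}
    (hc1 : c ∈ Icc a b) (hd1 : d ∈ Icc a b) : |φ d - φ c| ≤ C * |d - c| := by
  rcases le_total c d with h | h
  · have := incr_bound_const h hd hc (fun t ht => hb t ⟨le_trans hc1.1 ht.1, le_trans ht.2 hd1.2⟩)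
    rwa [abs_of_nonneg (by linarith : (0:ℝ) ≤ d - c)]
  · have := incr_bound_const h hd hc (fun t ht => hb t ⟨le_trans hd1.1 ht.1, le_trans ht.2 hc1.2⟩)
    rw [abs_sub_comm, abs_sub_comm d c, abs_of_nonneg (by linarith : (0:ℝ) ≤ c - d)]
    exact this

lemma cont_sliceX {g : ℝ × ℝ → ℝ} (hc : Continuous g) (y : ℝ) :
    Continuous fun t => g (t, y) := hc.comp (continuous_id.prodMk continuous_const)

lemma cont_sliceY {g : ℝ × ℝ → ℝ} (hc : Continuous g) (x : ℝ) :
    Continuous fun t => g (x, t) := hc.comp (continuous_const.prodMk continuous_id)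

lemma contDiff_pdx_succ {f : ℝ × ℝ → ℝ} {n : ℕ} (hf : ContDiff ℝ (n + 1 : ℕ) f) :
    ContDiff ℝ (n : ℕ) (pdx f) :=
  (hf.fderiv_right (by exact_mod_cast le_refl _)).clm_apply contDiff_const

lemma contDiff_pdy_succ {f : ℝ × ℝ → ℝ} {n : ℕ} (hf : ContDiff ℝ (n + 1 : ℕ) f) :
    ContDiff ℝ (n : ℕ) (pdy f) :=
  (hf.fderiv_right (by exact_mod_cast le_refl _)).clm_apply contDiff_const

lemma incrX_le {f : ℝ × ℝ → ℝ} {M : ℝ → ℝ} (hf : Differentiable ℝ f)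
    (hc : Continuous (pdx f)) {X0 X1 Y' : ℝ} (hx : X0 ≤ X1) (hM : Continuous M)
    (hb : ∀ t ∈ Icc X0 X1, |pdx f (t, Y')| ≤ M t) :
    |f (X1, Y') - f (X0, Y')| ≤ ∫ t in X0..X1, M t :=
  incr_bound hx (fun t => hasDerivAt_sliceX (hf _)) (cont_sliceX hc Y') hM hb

lemma incrY_le {f : ℝ × ℝ → ℝ} {M : ℝ → ℝ} (hf : Differentiable ℝ f)
    (hc : Continuous (pdy f)) {Y0 Y1 X' : ℝ} (hy : Y0 ≤ Y1) (hM : Continuous M)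
    (hb : ∀ t ∈ Icc Y0 Y1, |pdy f (X', t)| ≤ M t) :
    |f (X', Y1) - f (X', Y0)| ≤ ∫ t in Y0..Y1, M t :=
  incr_bound hy (fun t => hasDerivAt_sliceY (hf _)) (cont_sliceY hc X') hM hb

lemma pdx_add {f g : ℝ × ℝ → ℝ} {p : ℝ × ℝ} (hf : DifferentiableAt ℝ f p)
    (hg : DifferentiableAt ℝ g p) :
    pdx (fun q => f q + g q) p = pdx f p + pdx g p := by
  simp only [pdx, fderiv_fun_add hf hg, ContinuousLinearMap.add_apply]

lemma pdx_sub {f g : ℝ × ℝ → ℝ} {p : ℝ × ℝ} (hf : DifferentiableAt ℝ f p)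
    (hg : DifferentiableAt ℝ g p) :
    pdx (fun q => f q - g q) p = pdx f p - pdx g p := by
  simp only [pdx, fderiv_fun_sub hf hg, ContinuousLinearMap.sub_apply]

lemma pdy_add {f g : ℝ × ℝ → ℝ} {p : ℝ × ℝ} (hf : DifferentiableAt ℝ f p)
    (hg : DifferentiableAt ℝ g p) :
    pdy (fun q => f q + g q) p = pdy f p + pdy g p := by
  simp only [pdy, fderiv_fun_add hf hg, ContinuousLinearMap.add_apply]

lemma pdy_sub {f g : ℝ × ℝ → ℝ} {p : ℝ × ℝ} (hf : DifferentiableAt ℝ f p)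
    (hg : DifferentiableAt ℝ g p) :
    pdy (fun q => f q - g q) p = pdy f p - pdy g p := by
  simp only [pdy, fderiv_fun_sub hf hg, ContinuousLinearMap.sub_apply]


lemma contDiff_pdx2 {f : ℝ × ℝ → ℝ} (hf : ContDiff ℝ 2 f) : ContDiff ℝ 1 (pdx f) :=
  (hf.fderiv_right (by norm_num)).clm_apply contDiff_const
lemma contDiff_pdy2 {f : ℝ × ℝ → ℝ} (hf : ContDiff ℝ 2 f) : ContDiff ℝ 1 (pdy f) :=
  (hf.fderiv_right (by norm_num)).clm_apply contDiff_const

lemma abs_add4 (a b c d : ℝ) : |a + (b + (c + d))| ≤ |a| + (|b| + (|c| + |d|)) :=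
  (abs_add_le _ _).trans (add_le_add_right ((abs_add_le _ _).trans
    (add_le_add_right (abs_add_le _ _) _)) _)

lemma abs_sub' (a b : ℝ) : |a - b| ≤ |a| + |b| := by
  rw [sub_eq_add_neg]
  exact (abs_add_le _ _).trans (by rw [abs_neg])

lemma div_bound_chain {num H B Nr fin : ℝ} (h1 : |num| ≤ B) (hH : 0 < H)
    (hHN : H⁻¹ ≤ Nr) (hB0 : 0 ≤ B) (h2 : B * Nr ≤ fin) : |num / H| ≤ fin := by
  rw [abs_div, abs_of_pos hH, div_eq_mul_inv]
  calc |num| * H⁻¹ ≤ B * Nr := mul_le_mul h1 hHN (inv_nonneg.2 hH.le) hB0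
    _ ≤ fin := h2

lemma div_bound_const {num H C B : ℝ} (h1 : |num| ≤ H * C) (hH : 0 < H)
    (h2 : C ≤ B) : |num / H| ≤ B := by
  rw [abs_div, abs_of_pos hH, div_le_iff₀ hH]
  calc |num| ≤ H * C := h1
    _ ≤ B * H := by nlinarith [abs_nonneg num]

lemma cell_bound {β C0 ε : ℝ} {S E1 E2 E12 u uI : ℝ × ℝ → ℝ}
    (hβ : 0 < β) (hC0 : 0 < C0) (hε : 0 < ε)
    (hS : BoundS C0 S) (hE1 : BoundE1 ε β C0 E1) (hE2 : BoundE2 ε C0 E2)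
    (hE12 : BoundE12 ε β C0 E12)
    (hu : ∀ p, u p = S p + E1 p + E2 p + E12 p)
    {lx ly En Nr : ℝ}
    (hlx0 : 0 ≤ lx) (hly0 : 0 ≤ ly)
    (hlxE : ∀ x : ℝ, x ≤ 1 - lx → Real.exp (-β * (1 - x) / ε) ≤ En)
    (hlyE : ∀ y : ℝ, ly ≤ y → Real.exp (-y / Real.sqrt ε) ≤ En)
    (hlyE' : ∀ y : ℝ, y ≤ 1 - ly → Real.exp (-(1 - y) / Real.sqrt ε) ≤ En)
    (hEn0 : 0 ≤ En) (hEn1 : En ≤ 1) (hEnN : En * Nr ≤ Nr⁻¹) (hN1 : 1 ≤ Nr)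
    {X0 X1 Y0 Y1 : ℝ}
    (hX00 : 0 ≤ X0) (hx : X0 < X1) (hX1 : X1 ≤ 1 - lx)
    (hY0l : ly ≤ Y0) (hy : Y0 < Y1) (hY1l : Y1 ≤ 1 - ly)
    (hHx : X1 - X0 ≤ 2 * Nr⁻¹) (hHy : Y1 - Y0 ≤ 3 * Nr⁻¹)
    (hHxN : (X1 - X0)⁻¹ ≤ Nr) (hHyN : (Y1 - Y0)⁻¹ ≤ Nr)
    (hbil : IsBilinearOn uI (Icc X0 X1 ×ˢ Icc Y0 Y1))
    (hnod : ∀ X Y : ℝ, (X = X0 ∨ X = X1) → (Y = Y0 ∨ Y = Y1) → uI (X, Y) = u (X, Y))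
    {p : ℝ × ℝ} (hp : p ∈ Ioo X0 X1 ×ˢ Ioo Y0 Y1) :
    |pdx (fun q => u q - uI q) p| + |pdy (fun q => u q - uI q) p| ≤
      (20 * C0 + 3 * C0 / β) * Nr⁻¹
      + 3 * (C0 * ε⁻¹ * Real.exp (-β * (1 - p.1) / ε))
      + 2 * (C0 * (Real.sqrt ε)⁻¹ *
          (Real.exp (-p.2 / Real.sqrt ε) + Real.exp (-(1 - p.2) / Real.sqrt ε))) := by
  obtain ⟨⟨hpx0, hpx1⟩, hpy0, hpy1⟩ := hp
  have hσ : 0 < Real.sqrt ε := Real.sqrt_pos.2 hε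
  have hNr0 : 0 < Nr := lt_of_lt_of_le one_pos hN1
  have hEnN' : En ≤ Nr⁻¹ := le_trans (le_mul_of_one_le_right hEn0 hN1) hEnN
  have hHx0 : 0 < X1 - X0 := sub_pos.2 hx
  have hHy0 : 0 < Y1 - Y0 := sub_pos.2 hy
  have hcell : ∀ X Y : ℝ, X0 ≤ X → X ≤ X1 → Y0 ≤ Y → Y ≤ Y1 → (X, Y) ∈ UnitSq := by
    intro X Y h1 h2 h3 h4
    simp only [UnitSq, Set.mem_prod, Set.mem_Icc]
    refine ⟨⟨by linarith, by linarith⟩, by linarith, by linarith⟩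
  -- smoothness
  have hS3 := hS.1
  have hE13 := hE1.1
  have hE23 := hE2.1
  have hE123 := hE12.1
  have hSd : Differentiable ℝ S := hS3.differentiable (by norm_num)
  have hE1d : Differentiable ℝ E1 := hE13.differentiable (by norm_num)
  have hE2d : Differentiable ℝ E2 := hE23.differentiable (by norm_num)
  have hE12d : Differentiable ℝ E12 := hE123.differentiable (by norm_num)
  have huEq : u = fun q => S q + E1 q + E2 q + E12 q := funext hu
  have hud : Differentiable ℝ u := by
    rw [huEq]; exact ((hSd.add hE1d).add hE2d).add hE12d
  have hPdyS2 : ContDiff ℝ 2 (pdy S) := contDiff_pdy hS3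
  have hPdxS2 : ContDiff ℝ 2 (pdx S) := contDiff_pdx hS3
  have hPdySd : Differentiable ℝ (pdy S) := hPdyS2.differentiable (by norm_num)
  have hPdxSd : Differentiable ℝ (pdx S) := hPdxS2.differentiable (by norm_num)
  have hcS20 : Continuous (pdx (pdx S)) := (contDiff_pdx2 hPdxS2).continuous
  have hcS11 : Continuous (pdx (pdy S)) := (contDiff_pdx2 hPdyS2).continuous
  have hcS02 : Continuous (pdy (pdy S)) := (contDiff_pdy2 hPdyS2).continuous
  have hcPdxS : Continuous (pdx S) := (contDiff_pdx hS3).continuous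
  have hcPdyS : Continuous (pdy S) := (contDiff_pdy hS3).continuous
  have hcPdxE1 : Continuous (pdx E1) := (contDiff_pdx hE13).continuous
  have hcPdyE1 : Continuous (pdy E1) := (contDiff_pdy hE13).continuous
  have hcPdxE2 : Continuous (pdx E2) := (contDiff_pdx hE23).continuous
  have hcPdyE2 : Continuous (pdy E2) := (contDiff_pdy hE23).continuous
  have hcPdxE12 : Continuous (pdx E12) := (contDiff_pdx hE123).continuous
  have hcPdyE12 : Continuous (pdy E12) := (contDiff_pdy hE123).continuous
  -- bound digests
  have hbS20 : ∀ q ∈ UnitSq, |pdx (pdx S) q| ≤ C0 := by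
    intro q hq; have := hS.2 2 0 (by norm_num) q hq; rwa [pd20] at this
  have hbS11 : ∀ q ∈ UnitSq, |pdx (pdy S) q| ≤ C0 := by
    intro q hq; have := hS.2 1 1 (by norm_num) q hq; rwa [pd11] at this
  have hbS02 : ∀ q ∈ UnitSq, |pdy (pdy S) q| ≤ C0 := by
    intro q hq; have := hS.2 0 2 (by norm_num) q hq; rwa [pd02] at this
  have hhalf : ε ^ (-(1:ℝ)/2) = (Real.sqrt ε)⁻¹ := by
    rw [Real.sqrt_eq_rpow, ← Real.rpow_neg hε.le]; norm_num
  have hbE1x : ∀ q ∈ UnitSq, |pdx E1 q| ≤ C0 * ε⁻¹ * Real.exp (-β * (1 - q.1) / ε) := by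
    intro q hq; have := hE1.2 1 0 (by norm_num) q hq
    rw [pd10] at this; simpa [Real.rpow_neg_one] using this
  have hbE1y : ∀ q ∈ UnitSq, |pdy E1 q| ≤ C0 * Real.exp (-β * (1 - q.1) / ε) := by
    intro q hq; have := hE1.2 0 1 (by norm_num) q hq
    rw [pd01] at this; simpa using this
  have hbE2x : ∀ q ∈ UnitSq, |pdx E2 q| ≤
      C0 * (Real.exp (-q.2 / Real.sqrt ε) + Real.exp (-(1 - q.2) / Real.sqrt ε)) := by
    intro q hq; have := hE2.2 1 0 (by norm_num) q hq
    rw [pd10] at this; simpa using this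
  have hbE2y : ∀ q ∈ UnitSq, |pdy E2 q| ≤ C0 * (Real.sqrt ε)⁻¹ *
      (Real.exp (-q.2 / Real.sqrt ε) + Real.exp (-(1 - q.2) / Real.sqrt ε)) := by
    intro q hq; have := hE2.2 0 1 (by norm_num) q hq
    rw [pd01] at this
    have e : (-(((1:ℕ)):ℝ)) / 2 = -(1:ℝ)/2 := by norm_num
    rw [e, hhalf] at this; exact this
  have hbE12x : ∀ q ∈ UnitSq, |pdx E12 q| ≤ C0 * ε⁻¹ * Real.exp (-β * (1 - q.1) / ε) *
      (Real.exp (-q.2 / Real.sqrt ε) + Real.exp (-(1 - q.2) / Real.sqrt ε)) := by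
    intro q hq; have := hE12.2 1 0 (by norm_num) q hq
    rw [pd10] at this
    have e : (-((((1:ℕ)):ℝ) + (((0:ℕ)):ℝ)/2)) = -(1:ℝ) := by norm_num
    rw [e, Real.rpow_neg_one] at this; exact this
  have hbE12y : ∀ q ∈ UnitSq, |pdy E12 q| ≤ C0 * (Real.sqrt ε)⁻¹ *
      Real.exp (-β * (1 - q.1) / ε) *
      (Real.exp (-q.2 / Real.sqrt ε) + Real.exp (-(1 - q.2) / Real.sqrt ε)) := by
    intro q hq; have := hE12.2 0 1 (by norm_num) q hq
    rw [pd01] at this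
    have e : (-((((0:ℕ)):ℝ) + (((1:ℕ)):ℝ)/2)) = -(1:ℝ)/2 := by norm_num
    rw [e, hhalf] at this; exact this
  -- x-direction quotient bounds
  have hQxS : ∀ Y' ∈ Icc Y0 Y1,
      |pdx S p - (S (X1, Y') - S (X0, Y')) / (X1 - X0)|
        ≤ C0 * (X1 - X0) + C0 * (Y1 - Y0) := by
    intro Y' hY'
    have hpy2 : p.2 ∈ Icc Y0 Y1 := ⟨hpy0.le, hpy1.le⟩
    -- step (a): move the quotient in y
    set φ : ℝ → ℝ := fun y => S (X1, y) - S (X0, y) with hφ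
    have hφd : ∀ y, HasDerivAt φ (pdy S (X1, y) - pdy S (X0, y)) y := fun y =>
      (hasDerivAt_sliceY (hSd _)).sub (hasDerivAt_sliceY (hSd _))
    have hφc : Continuous fun y => pdy S (X1, y) - pdy S (X0, y) :=
      (cont_sliceY hcPdyS X1).sub (cont_sliceY hcPdyS X0)
    have hbφ : ∀ y ∈ Icc Y0 Y1, |pdy S (X1, y) - pdy S (X0, y)| ≤ C0 * (X1 - X0) := by
      intro y hyc
      have := incr_bound_const hx.le (fun tt => hasDerivAt_sliceX (hPdySd _))
        (cont_sliceX hcS11 y)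
        (fun tt htt => hbS11 (tt, y) (hcell _ _ htt.1 htt.2 hyc.1 hyc.2))
      linarith [this]
    have hstepA : |φ Y' - φ p.2| ≤ C0 * (X1 - X0) * (Y1 - Y0) := by
      have h := mvt_two_points hφd hφc hbφ hpy2 hY'
      have habs : |Y' - p.2| ≤ Y1 - Y0 := by
        rw [abs_le]; constructor <;> [linarith [hY'.1, hpy2.2]; linarith [hY'.2, hpy2.1]]
      calc |φ Y' - φ p.2| ≤ C0 * (X1 - X0) * |Y' - p.2| := h
        _ ≤ C0 * (X1 - X0) * (Y1 - Y0) := by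
            apply mul_le_mul_of_nonneg_left habs (by positivity)
    -- step (b): exact MVT in x at height p.2
    obtain ⟨ξ, hξ, hslope⟩ := exists_hasDerivAt_eq_slope (fun tt => S (tt, p.2))
      (fun tt => pdx S (tt, p.2)) hx
      (Continuous.continuousOn (cont_sliceX hSd.continuous p.2))
      (fun tt _ => hasDerivAt_sliceX (hSd _))
    -- step (c): move pdx S in x
    have hstepC : |pdx S p - pdx S (ξ, p.2)| ≤ C0 * (X1 - X0) := by
      have hb20 : ∀ tt ∈ Icc X0 X1, |pdx (pdx S) (tt, p.2)| ≤ C0 :=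
        fun tt htt => hbS20 (tt, p.2) (hcell _ _ htt.1 htt.2 hpy0.le hpy1.le)
      have h := mvt_two_points (fun tt => hasDerivAt_sliceX (hPdxSd _))
        (cont_sliceX hcS20 p.2) hb20 (c := ξ) (d := p.1)
        ⟨hξ.1.le, hξ.2.le⟩ ⟨hpx0.le, hpx1.le⟩
      have habs : |p.1 - ξ| ≤ X1 - X0 := by
        rw [abs_le]; constructor <;> [linarith [hξ.2, hpx0]; linarith [hξ.1, hpx1]]
      have hpeta : (p.1, p.2) = p := Prod.mk.eta
      rw [hpeta] at h
      calc |pdx S p - pdx S (ξ, p.2)| ≤ C0 * |p.1 - ξ| := h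
        _ ≤ C0 * (X1 - X0) := mul_le_mul_of_nonneg_left habs hC0.le
    have hbb : |pdx S (ξ, p.2) - (S (X1, Y') - S (X0, Y')) / (X1 - X0)|
        ≤ C0 * (Y1 - Y0) := by
      rw [hslope]
      have : (fun tt => S (tt, p.2)) X1 - (fun tt => S (tt, p.2)) X0 = φ p.2 := rfl
      rw [this]
      have : φ p.2 / (X1 - X0) - (S (X1, Y') - S (X0, Y')) / (X1 - X0)
          = (φ p.2 - φ Y') / (X1 - X0) := by
        rw [hφ]; field_simp
      rw [this, abs_div, abs_of_pos hHx0, div_le_iff₀ hHx0]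
      have h := hstepA
      rw [abs_sub_comm] at h
      calc |φ p.2 - φ Y'| ≤ C0 * (X1 - X0) * (Y1 - Y0) := h
        _ = C0 * (Y1 - Y0) * (X1 - X0) := by ring
    calc |pdx S p - (S (X1, Y') - S (X0, Y')) / (X1 - X0)|
        ≤ |pdx S p - pdx S (ξ, p.2)|
          + |pdx S (ξ, p.2) - (S (X1, Y') - S (X0, Y')) / (X1 - X0)| := by
          have : pdx S p - (S (X1, Y') - S (X0, Y')) / (X1 - X0)
              = (pdx S p - pdx S (ξ, p.2))
                + (pdx S (ξ, p.2) - (S (X1, Y') - S (X0, Y')) / (X1 - X0)) := by ring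
          rw [this]; exact abs_add_le _ _
      _ ≤ C0 * (X1 - X0) + C0 * (Y1 - Y0) := add_le_add hstepC hbb
  -- y-direction quotient bound for S
  have hQyS : ∀ X' ∈ Icc X0 X1,
      |pdy S p - (S (X', Y1) - S (X', Y0)) / (Y1 - Y0)|
        ≤ C0 * (X1 - X0) + C0 * (Y1 - Y0) := by
    intro X' hX'
    obtain ⟨η, hη, hslope⟩ := exists_hasDerivAt_eq_slope (fun tt => S (X', tt))
      (fun tt => pdy S (X', tt)) hy
      (Continuous.continuousOn (cont_sliceY hSd.continuous X'))
      (fun tt _ => hasDerivAt_sliceY (hSd _))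
    have h1 : |pdy S (X', η) - pdy S (p.1, η)| ≤ C0 * (X1 - X0) := by
      have hb11 : ∀ tt ∈ Icc X0 X1, |pdx (pdy S) (tt, η)| ≤ C0 :=
        fun tt htt => hbS11 (tt, η) (hcell _ _ htt.1 htt.2 hη.1.le hη.2.le)
      have h := mvt_two_points (fun tt => hasDerivAt_sliceX (hPdySd _))
        (cont_sliceX hcS11 η) hb11 (c := p.1) (d := X')
        ⟨hpx0.le, hpx1.le⟩ hX'
      have habs : |X' - p.1| ≤ X1 - X0 := by
        rw [abs_le]; constructor <;> [linarith [hX'.1, hpx1]; linarith [hX'.2, hpx0]]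
      calc |pdy S (X', η) - pdy S (p.1, η)| ≤ C0 * |X' - p.1| := by
            rw [abs_sub_comm] at h; rwa [abs_sub_comm]
        _ ≤ C0 * (X1 - X0) := mul_le_mul_of_nonneg_left habs hC0.le
    have h2 : |pdy S (p.1, η) - pdy S p| ≤ C0 * (Y1 - Y0) := by
      have hb02 : ∀ tt ∈ Icc Y0 Y1, |pdy (pdy S) (p.1, tt)| ≤ C0 :=
        fun tt htt => hbS02 (p.1, tt) (hcell _ _ hpx0.le hpx1.le htt.1 htt.2)
      have h := mvt_two_points (fun tt => hasDerivAt_sliceY (hPdySd _))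
        (cont_sliceY hcS02 p.1) hb02 (c := η) (d := p.2)
        ⟨hη.1.le, hη.2.le⟩ ⟨hpy0.le, hpy1.le⟩
      have habs : |p.2 - η| ≤ Y1 - Y0 := by
        rw [abs_le]; constructor <;> [linarith [hη.2, hpy0]; linarith [hη.1, hpy1]]
      have hpeta : (p.1, p.2) = p := Prod.mk.eta
      rw [hpeta] at h
      calc |pdy S (p.1, η) - pdy S p| ≤ C0 * |p.2 - η| := by
            rw [abs_sub_comm]; exact h
        _ ≤ C0 * (Y1 - Y0) := mul_le_mul_of_nonneg_left habs hC0.le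
    have : pdy S p - (S (X', Y1) - S (X', Y0)) / (Y1 - Y0)
        = -((pdy S (X', η) - pdy S (p.1, η)) + (pdy S (p.1, η) - pdy S p)) := by
      have hv : pdy S (X', η) = (S (X', Y1) - S (X', Y0)) / (Y1 - Y0) := hslope
      rw [hv]; ring
    rw [this, abs_neg]
    calc |(pdy S (X', η) - pdy S (p.1, η)) + (pdy S (p.1, η) - pdy S p)|
        ≤ |pdy S (X', η) - pdy S (p.1, η)| + |pdy S (p.1, η) - pdy S p| := abs_add_le _ _
      _ ≤ C0 * (X1 - X0) + C0 * (Y1 - Y0) := add_le_add h1 h2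
  -- E1, x-quotient
  have hQxE1 : ∀ Y' ∈ Icc Y0 Y1,
      |(E1 (X1, Y') - E1 (X0, Y')) / (X1 - X0)| ≤ C0 / β * Nr⁻¹ := by
    intro Y' hY'
    have hMc : Continuous fun tt => C0 * (ε⁻¹ * Real.exp (-β * (1 - tt) / ε)) :=
      continuous_const.mul (continuous_const.mul (contExpX β ε))
    have hinc := incrX_le hE1d hcPdxE1 hx.le hMc (Y' := Y')
      (fun tt htt => by
        have h := hbE1x (tt, Y') (hcell _ _ htt.1 htt.2 hY'.1 hY'.2)
        calc |pdx E1 (tt, Y')| ≤ C0 * ε⁻¹ * Real.exp (-β * (1 - (tt, Y').1) / ε) := h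
          _ = C0 * (ε⁻¹ * Real.exp (-β * (1 - tt) / ε)) := by ring)
    have hval : (∫ tt in X0..X1, C0 * (ε⁻¹ * Real.exp (-β * (1 - tt) / ε)))
        ≤ C0 * (β⁻¹ * En) := by
      rw [intervalIntegral.integral_const_mul, expInt1 hε hβ]
      have h1 : Real.exp (-β * (1 - X1) / ε) ≤ En := hlxE X1 hX1
      have h2 : (0:ℝ) ≤ Real.exp (-β * (1 - X0) / ε) := (Real.exp_pos _).le
      have hβi : (0:ℝ) ≤ β⁻¹ := inv_nonneg.2 hβ.le
      nlinarith [mul_nonneg hβi h2, mul_le_mul_of_nonneg_left h1 hβi]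
    refine div_bound_chain (le_trans hinc hval) hHx0 hHxN (by positivity) ?_
    have h := mul_le_mul_of_nonneg_left hEnN (le_of_lt (div_pos hC0 hβ))
    calc C0 * (β⁻¹ * En) * Nr = C0 / β * (En * Nr) := by ring
      _ ≤ C0 / β * Nr⁻¹ := h
  -- E2, x-quotient
  have hQxE2 : ∀ Y' ∈ Icc Y0 Y1,
      |(E2 (X1, Y') - E2 (X0, Y')) / (X1 - X0)| ≤ 2 * C0 * Nr⁻¹ := by
    intro Y' hY'
    have hEY' : Real.exp (-Y' / Real.sqrt ε) + Real.exp (-(1 - Y') / Real.sqrt ε)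
        ≤ 2 * En := by
      have := hlyE Y' (le_trans hY0l hY'.1)
      have := hlyE' Y' (le_trans hY'.2 hY1l)
      linarith
    have hinc := incrX_le hE2d hcPdxE2 hx.le (M := fun _ => C0 *
        (Real.exp (-Y' / Real.sqrt ε) + Real.exp (-(1 - Y') / Real.sqrt ε)))
      continuous_const (Y' := Y')
      (fun tt htt => hbE2x (tt, Y') (hcell _ _ htt.1 htt.2 hY'.1 hY'.2))
    rw [intervalIntegral.integral_const, smul_eq_mul] at hinc
    refine div_bound_const (by linarith [hinc] :
      |E2 (X1, Y') - E2 (X0, Y')| ≤ (X1 - X0) * (C0 *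
        (Real.exp (-Y' / Real.sqrt ε) + Real.exp (-(1 - Y') / Real.sqrt ε)))) hHx0 ?_
    nlinarith [hEnN', hC0.le]
  -- E12, x-quotient
  have hQxE12 : ∀ Y' ∈ Icc Y0 Y1,
      |(E12 (X1, Y') - E12 (X0, Y')) / (X1 - X0)| ≤ 2 * C0 / β * Nr⁻¹ := by
    intro Y' hY'
    have hEY' : Real.exp (-Y' / Real.sqrt ε) + Real.exp (-(1 - Y') / Real.sqrt ε)
        ≤ 2 * En := by
      have := hlyE Y' (le_trans hY0l hY'.1)
      have := hlyE' Y' (le_trans hY'.2 hY1l)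
      linarith
    have hMc : Continuous fun tt => (C0 * (2 * En)) *
        (ε⁻¹ * Real.exp (-β * (1 - tt) / ε)) :=
      continuous_const.mul (continuous_const.mul (contExpX β ε))
    have hinc := incrX_le hE12d hcPdxE12 hx.le hMc (Y' := Y')
      (fun tt htt => by
        have h := hbE12x (tt, Y') (hcell _ _ htt.1 htt.2 hY'.1 hY'.2)
        have hexp : (0:ℝ) < Real.exp (-β * (1 - tt) / ε) := Real.exp_pos _
        calc |pdx E12 (tt, Y')|
            ≤ C0 * ε⁻¹ * Real.exp (-β * (1 - tt) / ε) *
              (Real.exp (-Y' / Real.sqrt ε) + Real.exp (-(1 - Y') / Real.sqrt ε)) := h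
          _ ≤ (C0 * (2 * En)) * (ε⁻¹ * Real.exp (-β * (1 - tt) / ε)) := by
              have hεi : (0:ℝ) ≤ ε⁻¹ := inv_nonneg.2 hε.le
              nlinarith [mul_nonneg (mul_nonneg hC0.le hεi) hexp.le])
    have hval : (∫ tt in X0..X1, (C0 * (2 * En)) *
        (ε⁻¹ * Real.exp (-β * (1 - tt) / ε))) ≤ (C0 * (2 * En)) * (β⁻¹ * En) := by
      rw [intervalIntegral.integral_const_mul, expInt1 hε hβ]
      have h1 : Real.exp (-β * (1 - X1) / ε) ≤ En := hlxE X1 hX1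
      have h2 : (0:ℝ) ≤ Real.exp (-β * (1 - X0) / ε) := (Real.exp_pos _).le
      have hβi : (0:ℝ) ≤ β⁻¹ := inv_nonneg.2 hβ.le
      have hCE : (0:ℝ) ≤ C0 * (2 * En) := by positivity
      nlinarith [mul_nonneg hβi h2, mul_le_mul_of_nonneg_left h1 hβi]
    refine div_bound_chain (le_trans hinc hval) hHx0 hHxN (by positivity) ?_
    have hq : En * (En * Nr) ≤ Nr⁻¹ := by
      calc En * (En * Nr) ≤ 1 * (En * Nr) :=
            mul_le_mul_of_nonneg_right hEn1 (by positivity)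
        _ = En * Nr := by ring
        _ ≤ Nr⁻¹ := hEnN
    have h := mul_le_mul_of_nonneg_left hq (by positivity : (0:ℝ) ≤ 2 * C0 / β)
    calc C0 * (2 * En) * (β⁻¹ * En) * Nr = 2 * C0 / β * (En * (En * Nr)) := by ring
      _ ≤ 2 * C0 / β * Nr⁻¹ := h
  -- E1, y-quotient
  have hQyE1 : ∀ X' ∈ Icc X0 X1,
      |(E1 (X', Y1) - E1 (X', Y0)) / (Y1 - Y0)| ≤ C0 * Nr⁻¹ := by
    intro X' hX'
    have hinc := incrY_le hE1d hcPdyE1 hy.le (M := fun _ => C0 * En)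
      continuous_const (X' := X')
      (fun tt htt => by
        have h := hbE1y (X', tt) (hcell _ _ hX'.1 hX'.2 htt.1 htt.2)
        have h2 : Real.exp (-β * (1 - X') / ε) ≤ En := hlxE X' (le_trans hX'.2 hX1)
        calc |pdy E1 (X', tt)| ≤ C0 * Real.exp (-β * (1 - (X', tt).1) / ε) := h
          _ ≤ C0 * En := mul_le_mul_of_nonneg_left h2 hC0.le)
    rw [intervalIntegral.integral_const, smul_eq_mul] at hinc
    refine div_bound_const hinc hHy0 ?_
    exact mul_le_mul_of_nonneg_left hEnN' hC0.le
  -- E2, y-quotient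
  have hQyE2 : ∀ X' ∈ Icc X0 X1,
      |(E2 (X', Y1) - E2 (X', Y0)) / (Y1 - Y0)| ≤ 2 * C0 * Nr⁻¹ := by
    intro X' hX'
    have hMc : Continuous fun s => C0 * ((Real.sqrt ε)⁻¹ *
        (Real.exp (-s / Real.sqrt ε) + Real.exp (-(1 - s) / Real.sqrt ε))) :=
      continuous_const.mul (continuous_const.mul (contExpY (Real.sqrt ε)))
    have hinc := incrY_le hE2d hcPdyE2 hy.le hMc (X' := X')
      (fun tt htt => by
        have h := hbE2y (X', tt) (hcell _ _ hX'.1 hX'.2 htt.1 htt.2)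
        calc |pdy E2 (X', tt)| ≤ C0 * (Real.sqrt ε)⁻¹ *
              (Real.exp (-(X', tt).2 / Real.sqrt ε)
                + Real.exp (-(1 - (X', tt).2) / Real.sqrt ε)) := h
          _ = C0 * ((Real.sqrt ε)⁻¹ *
              (Real.exp (-tt / Real.sqrt ε) + Real.exp (-(1 - tt) / Real.sqrt ε))) := by
              ring)
    have hval : (∫ s in Y0..Y1, C0 * ((Real.sqrt ε)⁻¹ *
        (Real.exp (-s / Real.sqrt ε) + Real.exp (-(1 - s) / Real.sqrt ε))))
        ≤ C0 * (2 * En) := by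
      rw [intervalIntegral.integral_const_mul, expInt2 hσ]
      have h1 : Real.exp (-Y0 / Real.sqrt ε) ≤ En := hlyE Y0 hY0l
      have h2 : Real.exp (-(1 - Y1) / Real.sqrt ε) ≤ En := hlyE' Y1 hY1l
      have h3 : (0:ℝ) ≤ Real.exp (-Y1 / Real.sqrt ε) := (Real.exp_pos _).le
      have h4 : (0:ℝ) ≤ Real.exp (-(1 - Y0) / Real.sqrt ε) := (Real.exp_pos _).le
      nlinarith [hC0.le]
    refine div_bound_chain (le_trans hinc hval) hHy0 hHyN (by positivity) ?_
    have h := mul_le_mul_of_nonneg_left hEnN (by positivity : (0:ℝ) ≤ 2 * C0)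
    calc C0 * (2 * En) * Nr = 2 * C0 * (En * Nr) := by ring
      _ ≤ 2 * C0 * Nr⁻¹ := h
  -- E12, y-quotient
  have hQyE12 : ∀ X' ∈ Icc X0 X1,
      |(E12 (X', Y1) - E12 (X', Y0)) / (Y1 - Y0)| ≤ 2 * C0 * Nr⁻¹ := by
    intro X' hX'
    have hX'E : Real.exp (-β * (1 - X') / ε) ≤ En := hlxE X' (le_trans hX'.2 hX1)
    have hMc : Continuous fun s => (C0 * En) * ((Real.sqrt ε)⁻¹ *
        (Real.exp (-s / Real.sqrt ε) + Real.exp (-(1 - s) / Real.sqrt ε))) :=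
      continuous_const.mul (continuous_const.mul (contExpY (Real.sqrt ε)))
    have hinc := incrY_le hE12d hcPdyE12 hy.le hMc (X' := X')
      (fun tt htt => by
        have h := hbE12y (X', tt) (hcell _ _ hX'.1 hX'.2 htt.1 htt.2)
        have hee : (0:ℝ) < Real.exp (-tt / Real.sqrt ε)
            + Real.exp (-(1 - tt) / Real.sqrt ε) := by positivity
        have hσi : (0:ℝ) ≤ (Real.sqrt ε)⁻¹ := inv_nonneg.2 hσ.le
        calc |pdy E12 (X', tt)| ≤ C0 * (Real.sqrt ε)⁻¹ *
              Real.exp (-β * (1 - (X', tt).1) / ε) *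
              (Real.exp (-(X', tt).2 / Real.sqrt ε)
                + Real.exp (-(1 - (X', tt).2) / Real.sqrt ε)) := h
          _ ≤ (C0 * En) * ((Real.sqrt ε)⁻¹ *
              (Real.exp (-tt / Real.sqrt ε) + Real.exp (-(1 - tt) / Real.sqrt ε))) := by
              nlinarith [mul_nonneg (mul_nonneg hC0.le hσi) hee.le])
    have hval : (∫ s in Y0..Y1, (C0 * En) * ((Real.sqrt ε)⁻¹ *
        (Real.exp (-s / Real.sqrt ε) + Real.exp (-(1 - s) / Real.sqrt ε))))
        ≤ (C0 * En) * (2 * En) := by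
      rw [intervalIntegral.integral_const_mul, expInt2 hσ]
      have h1 : Real.exp (-Y0 / Real.sqrt ε) ≤ En := hlyE Y0 hY0l
      have h2 : Real.exp (-(1 - Y1) / Real.sqrt ε) ≤ En := hlyE' Y1 hY1l
      have h3 : (0:ℝ) ≤ Real.exp (-Y1 / Real.sqrt ε) := (Real.exp_pos _).le
      have h4 : (0:ℝ) ≤ Real.exp (-(1 - Y0) / Real.sqrt ε) := (Real.exp_pos _).le
      nlinarith [mul_nonneg hC0.le hEn0]
    refine div_bound_chain (le_trans hinc hval) hHy0 hHyN (by positivity) ?_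
    have hq : En * (En * Nr) ≤ Nr⁻¹ := by
      calc En * (En * Nr) ≤ 1 * (En * Nr) :=
            mul_le_mul_of_nonneg_right hEn1 (by positivity)
        _ = En * Nr := by ring
        _ ≤ Nr⁻¹ := hEnN
    have h := mul_le_mul_of_nonneg_left hq (by positivity : (0:ℝ) ≤ 2 * C0)
    calc C0 * En * (2 * En) * Nr = 2 * C0 * (En * (En * Nr)) := by ring
      _ ≤ 2 * C0 * Nr⁻¹ := h
  -- direct bounds at p
  have hpeta : (p.1, p.2) = p := Prod.mk.eta
  have hpU : p ∈ UnitSq := by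
    rw [← hpeta]; exact hcell _ _ hpx0.le hpx1.le hpy0.le hpy1.le
  have hexpP : Real.exp (-β * (1 - p.1) / ε) ≤ En := hlxE p.1 (by linarith)
  have heeP : Real.exp (-p.2 / Real.sqrt ε) + Real.exp (-(1 - p.2) / Real.sqrt ε)
      ≤ 2 * En := by
    have := hlyE p.2 (by linarith)
    have := hlyE' p.2 (by linarith)
    linarith
  have heeP0 : (0:ℝ) < Real.exp (-p.2 / Real.sqrt ε)
      + Real.exp (-(1 - p.2) / Real.sqrt ε) := by positivity
  have hexpP0 : (0:ℝ) < Real.exp (-β * (1 - p.1) / ε) := Real.exp_pos _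
  have hdE1x : |pdx E1 p| ≤ C0 * ε⁻¹ * Real.exp (-β * (1 - p.1) / ε) := hbE1x p hpU
  have hdE2x : |pdx E2 p| ≤ 2 * C0 * Nr⁻¹ := by
    have h := hbE2x p hpU
    have : C0 * (Real.exp (-p.2 / Real.sqrt ε) + Real.exp (-(1 - p.2) / Real.sqrt ε))
        ≤ 2 * C0 * Nr⁻¹ := by nlinarith [hC0.le, hEnN']
    linarith
  have hdE12x : |pdx E12 p| ≤ 2 * (C0 * ε⁻¹ * Real.exp (-β * (1 - p.1) / ε)) := by
    have h := hbE12x p hpU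
    have hεi : (0:ℝ) ≤ ε⁻¹ := inv_nonneg.2 hε.le
    have hge : (0:ℝ) ≤ C0 * ε⁻¹ * Real.exp (-β * (1 - p.1) / ε) := by positivity
    nlinarith [hEn1]
  have hdE1y : |pdy E1 p| ≤ C0 * Nr⁻¹ := by
    have h := hbE1y p hpU
    nlinarith [hC0.le, hEnN']
  have hdE2y : |pdy E2 p| ≤ C0 * (Real.sqrt ε)⁻¹ *
      (Real.exp (-p.2 / Real.sqrt ε) + Real.exp (-(1 - p.2) / Real.sqrt ε)) :=
    hbE2y p hpU
  have hdE12y : |pdy E12 p| ≤ C0 * (Real.sqrt ε)⁻¹ *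
      (Real.exp (-p.2 / Real.sqrt ε) + Real.exp (-(1 - p.2) / Real.sqrt ε)) := by
    have h := hbE12y p hpU
    have hσi : (0:ℝ) ≤ (Real.sqrt ε)⁻¹ := inv_nonneg.2 hσ.le
    nlinarith [mul_nonneg (mul_nonneg hC0.le hσi) heeP0.le, hEn1, hexpP]
  -- interpolant derivative
  obtain ⟨huId, hIx, hIy⟩ := bilinear_deriv hx hy hbil ⟨⟨hpx0, hpx1⟩, ⟨hpy0, hpy1⟩⟩
  set sc := (p.2 - Y0) / (Y1 - Y0) with hscdef
  set tc := (p.1 - X0) / (X1 - X0) with htcdef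
  have hs0 : 0 ≤ sc := div_nonneg (by linarith) hHy0.le
  have hs1 : sc ≤ 1 := by rw [hscdef, div_le_one hHy0]; linarith
  have ht0 : 0 ≤ tc := div_nonneg (by linarith) hHx0.le
  have ht1 : tc ≤ 1 := by rw [htcdef, div_le_one hHx0]; linarith
  have hIx' : pdx uI p =
      ((1 - sc) * ((S (X1, Y0) - S (X0, Y0)) / (X1 - X0))
        + sc * ((S (X1, Y1) - S (X0, Y1)) / (X1 - X0)))
      + (((1 - sc) * ((E1 (X1, Y0) - E1 (X0, Y0)) / (X1 - X0))
        + sc * ((E1 (X1, Y1) - E1 (X0, Y1)) / (X1 - X0)))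
      + (((1 - sc) * ((E2 (X1, Y0) - E2 (X0, Y0)) / (X1 - X0))
        + sc * ((E2 (X1, Y1) - E2 (X0, Y1)) / (X1 - X0)))
      + ((1 - sc) * ((E12 (X1, Y0) - E12 (X0, Y0)) / (X1 - X0))
        + sc * ((E12 (X1, Y1) - E12 (X0, Y1)) / (X1 - X0))))) := by
    rw [hIx, hnod X1 Y0 (Or.inr rfl) (Or.inl rfl), hnod X0 Y0 (Or.inl rfl) (Or.inl rfl),
      hnod X1 Y1 (Or.inr rfl) (Or.inr rfl), hnod X0 Y1 (Or.inl rfl) (Or.inr rfl),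
      hu (X1, Y0), hu (X0, Y0), hu (X1, Y1), hu (X0, Y1)]
    ring
  have hIy' : pdy uI p =
      ((1 - tc) * ((S (X0, Y1) - S (X0, Y0)) / (Y1 - Y0))
        + tc * ((S (X1, Y1) - S (X1, Y0)) / (Y1 - Y0)))
      + (((1 - tc) * ((E1 (X0, Y1) - E1 (X0, Y0)) / (Y1 - Y0))
        + tc * ((E1 (X1, Y1) - E1 (X1, Y0)) / (Y1 - Y0)))
      + (((1 - tc) * ((E2 (X0, Y1) - E2 (X0, Y0)) / (Y1 - Y0))
        + tc * ((E2 (X1, Y1) - E2 (X1, Y0)) / (Y1 - Y0)))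
      + ((1 - tc) * ((E12 (X0, Y1) - E12 (X0, Y0)) / (Y1 - Y0))
        + tc * ((E12 (X1, Y1) - E12 (X1, Y0)) / (Y1 - Y0))))) := by
    rw [hIy, hnod X1 Y0 (Or.inr rfl) (Or.inl rfl), hnod X0 Y0 (Or.inl rfl) (Or.inl rfl),
      hnod X1 Y1 (Or.inr rfl) (Or.inr rfl), hnod X0 Y1 (Or.inl rfl) (Or.inr rfl),
      hu (X1, Y0), hu (X0, Y0), hu (X1, Y1), hu (X0, Y1)]
    ring
  -- derivative of the difference splits
  have hfdu : HasFDerivAt u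
      (fderiv ℝ S p + fderiv ℝ E1 p + fderiv ℝ E2 p + fderiv ℝ E12 p) p := by
    rw [huEq]
    exact (((hSd p).hasFDerivAt.add (hE1d p).hasFDerivAt).add
      (hE2d p).hasFDerivAt).add (hE12d p).hasFDerivAt
  have hfdsub : HasFDerivAt (fun q => u q - uI q)
      ((fderiv ℝ S p + fderiv ℝ E1 p + fderiv ℝ E2 p + fderiv ℝ E12 p)
        - fderiv ℝ uI p) p := hfdu.sub huId.hasFDerivAt
  have hsubx : pdx (fun q => u q - uI q) p
      = (pdx S p + pdx E1 p + pdx E2 p + pdx E12 p) - pdx uI p := by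
    simp only [pdx]
    rw [hfdsub.fderiv]
    simp only [ContinuousLinearMap.sub_apply, ContinuousLinearMap.add_apply]
  have hsuby : pdy (fun q => u q - uI q) p
      = (pdy S p + pdy E1 p + pdy E2 p + pdy E12 p) - pdy uI p := by
    simp only [pdy]
    rw [hfdsub.fderiv]
    simp only [ContinuousLinearMap.sub_apply, ContinuousLinearMap.add_apply]
  have hY0m : Y0 ∈ Icc Y0 Y1 := ⟨le_refl _, hy.le⟩
  have hY1m : Y1 ∈ Icc Y0 Y1 := ⟨hy.le, le_refl _⟩
  have hX0m : X0 ∈ Icc X0 X1 := ⟨le_refl _, hx.le⟩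
  have hX1m : X1 ∈ Icc X0 X1 := ⟨hx.le, le_refl _⟩
  -- x-direction total
  have hXfinal : |pdx (fun q => u q - uI q) p|
      ≤ (9 * C0 + 3 * C0 / β) * Nr⁻¹
        + 3 * (C0 * ε⁻¹ * Real.exp (-β * (1 - p.1) / ε)) := by
    rw [hsubx, hIx']
    have hsplit : (pdx S p + pdx E1 p + pdx E2 p + pdx E12 p) -
        (((1 - sc) * ((S (X1, Y0) - S (X0, Y0)) / (X1 - X0))
          + sc * ((S (X1, Y1) - S (X0, Y1)) / (X1 - X0)))
        + (((1 - sc) * ((E1 (X1, Y0) - E1 (X0, Y0)) / (X1 - X0))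
          + sc * ((E1 (X1, Y1) - E1 (X0, Y1)) / (X1 - X0)))
        + (((1 - sc) * ((E2 (X1, Y0) - E2 (X0, Y0)) / (X1 - X0))
          + sc * ((E2 (X1, Y1) - E2 (X0, Y1)) / (X1 - X0)))
        + ((1 - sc) * ((E12 (X1, Y0) - E12 (X0, Y0)) / (X1 - X0))
          + sc * ((E12 (X1, Y1) - E12 (X0, Y1)) / (X1 - X0))))))
        = (pdx S p - ((1 - sc) * ((S (X1, Y0) - S (X0, Y0)) / (X1 - X0))
            + sc * ((S (X1, Y1) - S (X0, Y1)) / (X1 - X0))))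
        + ((pdx E1 p - ((1 - sc) * ((E1 (X1, Y0) - E1 (X0, Y0)) / (X1 - X0))
            + sc * ((E1 (X1, Y1) - E1 (X0, Y1)) / (X1 - X0))))
        + ((pdx E2 p - ((1 - sc) * ((E2 (X1, Y0) - E2 (X0, Y0)) / (X1 - X0))
            + sc * ((E2 (X1, Y1) - E2 (X0, Y1)) / (X1 - X0))))
        + (pdx E12 p - ((1 - sc) * ((E12 (X1, Y0) - E12 (X0, Y0)) / (X1 - X0))
            + sc * ((E12 (X1, Y1) - E12 (X0, Y1)) / (X1 - X0)))))) := by ring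
    rw [hsplit]
    refine (abs_add4 _ _ _ _).trans ?_
    have b1 : |pdx S p - ((1 - sc) * ((S (X1, Y0) - S (X0, Y0)) / (X1 - X0))
        + sc * ((S (X1, Y1) - S (X0, Y1)) / (X1 - X0)))| ≤ 5 * C0 * Nr⁻¹ := by
      have h := comb_abs_le hs0 hs1 (hQxS Y0 hY0m) (hQxS Y1 hY1m)
      have h1 := mul_le_mul_of_nonneg_left hHx hC0.le
      have h2 := mul_le_mul_of_nonneg_left hHy hC0.le
      calc _ ≤ C0 * (X1 - X0) + C0 * (Y1 - Y0) := h
        _ ≤ 5 * C0 * Nr⁻¹ := by linarith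
    have b2 : |pdx E1 p - ((1 - sc) * ((E1 (X1, Y0) - E1 (X0, Y0)) / (X1 - X0))
        + sc * ((E1 (X1, Y1) - E1 (X0, Y1)) / (X1 - X0)))|
        ≤ C0 * ε⁻¹ * Real.exp (-β * (1 - p.1) / ε) + C0 / β * Nr⁻¹ := by
      refine (abs_sub' _ _).trans (add_le_add hdE1x ?_)
      exact comb_abs_le' hs0 hs1 (hQxE1 Y0 hY0m) (hQxE1 Y1 hY1m)
    have b3 : |pdx E2 p - ((1 - sc) * ((E2 (X1, Y0) - E2 (X0, Y0)) / (X1 - X0))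
        + sc * ((E2 (X1, Y1) - E2 (X0, Y1)) / (X1 - X0)))|
        ≤ 2 * C0 * Nr⁻¹ + 2 * C0 * Nr⁻¹ := by
      refine (abs_sub' _ _).trans (add_le_add hdE2x ?_)
      exact comb_abs_le' hs0 hs1 (hQxE2 Y0 hY0m) (hQxE2 Y1 hY1m)
    have b4 : |pdx E12 p - ((1 - sc) * ((E12 (X1, Y0) - E12 (X0, Y0)) / (X1 - X0))
        + sc * ((E12 (X1, Y1) - E12 (X0, Y1)) / (X1 - X0)))|
        ≤ 2 * (C0 * ε⁻¹ * Real.exp (-β * (1 - p.1) / ε)) + 2 * C0 / β * Nr⁻¹ := by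
      refine (abs_sub' _ _).trans (add_le_add hdE12x ?_)
      exact comb_abs_le' hs0 hs1 (hQxE12 Y0 hY0m) (hQxE12 Y1 hY1m)
    have hsum := add_le_add b1 (add_le_add b2 (add_le_add b3 b4))
    refine hsum.trans (le_of_eq ?_)
    field_simp
    ring
  -- y-direction total
  have hYfinal : |pdy (fun q => u q - uI q) p|
      ≤ 11 * C0 * Nr⁻¹
        + 2 * (C0 * (Real.sqrt ε)⁻¹ *
          (Real.exp (-p.2 / Real.sqrt ε) + Real.exp (-(1 - p.2) / Real.sqrt ε))) := by
    rw [hsuby, hIy']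
    have hsplit : (pdy S p + pdy E1 p + pdy E2 p + pdy E12 p) -
        (((1 - tc) * ((S (X0, Y1) - S (X0, Y0)) / (Y1 - Y0))
          + tc * ((S (X1, Y1) - S (X1, Y0)) / (Y1 - Y0)))
        + (((1 - tc) * ((E1 (X0, Y1) - E1 (X0, Y0)) / (Y1 - Y0))
          + tc * ((E1 (X1, Y1) - E1 (X1, Y0)) / (Y1 - Y0)))
        + (((1 - tc) * ((E2 (X0, Y1) - E2 (X0, Y0)) / (Y1 - Y0))
          + tc * ((E2 (X1, Y1) - E2 (X1, Y0)) / (Y1 - Y0)))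
        + ((1 - tc) * ((E12 (X0, Y1) - E12 (X0, Y0)) / (Y1 - Y0))
          + tc * ((E12 (X1, Y1) - E12 (X1, Y0)) / (Y1 - Y0))))))
        = (pdy S p - ((1 - tc) * ((S (X0, Y1) - S (X0, Y0)) / (Y1 - Y0))
            + tc * ((S (X1, Y1) - S (X1, Y0)) / (Y1 - Y0))))
        + ((pdy E1 p - ((1 - tc) * ((E1 (X0, Y1) - E1 (X0, Y0)) / (Y1 - Y0))
            + tc * ((E1 (X1, Y1) - E1 (X1, Y0)) / (Y1 - Y0))))
        + ((pdy E2 p - ((1 - tc) * ((E2 (X0, Y1) - E2 (X0, Y0)) / (Y1 - Y0))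
            + tc * ((E2 (X1, Y1) - E2 (X1, Y0)) / (Y1 - Y0))))
        + (pdy E12 p - ((1 - tc) * ((E12 (X0, Y1) - E12 (X0, Y0)) / (Y1 - Y0))
            + tc * ((E12 (X1, Y1) - E12 (X1, Y0)) / (Y1 - Y0)))))) := by ring
    rw [hsplit]
    refine (abs_add4 _ _ _ _).trans ?_
    have b1 : |pdy S p - ((1 - tc) * ((S (X0, Y1) - S (X0, Y0)) / (Y1 - Y0))
        + tc * ((S (X1, Y1) - S (X1, Y0)) / (Y1 - Y0)))| ≤ 5 * C0 * Nr⁻¹ := by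
      have h := comb_abs_le ht0 ht1 (hQyS X0 hX0m) (hQyS X1 hX1m)
      have h1 := mul_le_mul_of_nonneg_left hHx hC0.le
      have h2 := mul_le_mul_of_nonneg_left hHy hC0.le
      calc _ ≤ C0 * (X1 - X0) + C0 * (Y1 - Y0) := h
        _ ≤ 5 * C0 * Nr⁻¹ := by linarith
    have b2 : |pdy E1 p - ((1 - tc) * ((E1 (X0, Y1) - E1 (X0, Y0)) / (Y1 - Y0))
        + tc * ((E1 (X1, Y1) - E1 (X1, Y0)) / (Y1 - Y0)))|
        ≤ C0 * Nr⁻¹ + C0 * Nr⁻¹ := by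
      refine (abs_sub' _ _).trans (add_le_add hdE1y ?_)
      exact comb_abs_le' ht0 ht1 (hQyE1 X0 hX0m) (hQyE1 X1 hX1m)
    have b3 : |pdy E2 p - ((1 - tc) * ((E2 (X0, Y1) - E2 (X0, Y0)) / (Y1 - Y0))
        + tc * ((E2 (X1, Y1) - E2 (X1, Y0)) / (Y1 - Y0)))|
        ≤ C0 * (Real.sqrt ε)⁻¹ *
            (Real.exp (-p.2 / Real.sqrt ε) + Real.exp (-(1 - p.2) / Real.sqrt ε))
          + 2 * C0 * Nr⁻¹ := by
      refine (abs_sub' _ _).trans (add_le_add hdE2y ?_)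
      exact comb_abs_le' ht0 ht1 (hQyE2 X0 hX0m) (hQyE2 X1 hX1m)
    have b4 : |pdy E12 p - ((1 - tc) * ((E12 (X0, Y1) - E12 (X0, Y0)) / (Y1 - Y0))
        + tc * ((E12 (X1, Y1) - E12 (X1, Y0)) / (Y1 - Y0)))|
        ≤ C0 * (Real.sqrt ε)⁻¹ *
            (Real.exp (-p.2 / Real.sqrt ε) + Real.exp (-(1 - p.2) / Real.sqrt ε))
          + 2 * C0 * Nr⁻¹ := by
      refine (abs_sub' _ _).trans (add_le_add hdE12y ?_)
      exact comb_abs_le' ht0 ht1 (hQyE12 X0 hX0m) (hQyE12 X1 hX1m)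
    have hsum := add_le_add b1 (add_le_add b2 (add_le_add b3 b4))
    refine hsum.trans (le_of_eq ?_)
    field_simp
    ring
  calc |pdx (fun q => u q - uI q) p| + |pdy (fun q => u q - uI q) p|
      ≤ ((9 * C0 + 3 * C0 / β) * Nr⁻¹
          + 3 * (C0 * ε⁻¹ * Real.exp (-β * (1 - p.1) / ε)))
        + (11 * C0 * Nr⁻¹
          + 2 * (C0 * (Real.sqrt ε)⁻¹ *
            (Real.exp (-p.2 / Real.sqrt ε) + Real.exp (-(1 - p.2) / Real.sqrt ε)))) :=
        add_le_add hXfinal hYfinal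
    _ = (20 * C0 + 3 * C0 / β) * Nr⁻¹
        + 3 * (C0 * ε⁻¹ * Real.exp (-β * (1 - p.1) / ε))
        + 2 * (C0 * (Real.sqrt ε)⁻¹ *
            (Real.exp (-p.2 / Real.sqrt ε) + Real.exp (-(1 - p.2) / Real.sqrt ε))) := by
        ring


lemma volume_vert_line (c : ℝ) : volume {x : ℝ × ℝ | x.1 = c} = 0 := by
  have h : {x : ℝ × ℝ | x.1 = c} = ({c} : Set ℝ) ×ˢ (univ : Set ℝ) := by
    ext x
    simp only [Set.mem_setOf_eq, Set.mem_prod, Set.mem_singleton_iff, Set.mem_univ, and_true]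
  rw [h, Measure.volume_eq_prod, Measure.prod_prod]
  simp

lemma volume_horiz_line (c : ℝ) : volume {x : ℝ × ℝ | x.2 = c} = 0 := by
  have h : {x : ℝ × ℝ | x.2 = c} = (univ : Set ℝ) ×ˢ ({c} : Set ℝ) := by
    ext x
    simp only [Set.mem_setOf_eq, Set.mem_prod, Set.mem_singleton_iff, Set.mem_univ, true_and]
  rw [h, Measure.volume_eq_prod, Measure.prod_prod]
  simp

lemma find_cell {H z : ℝ} (hH : 0 < H) {mm : ℕ} (h0 : 0 ≤ z) (hzT : z ≤ (mm : ℝ) * H)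
    (hne : ∀ i : ℕ, i ≤ mm → z ≠ (i : ℝ) * H) :
    ∃ k : ℕ, k < mm ∧ (k : ℝ) * H < z ∧ z < ((k : ℝ) + 1) * H := by
  set k := Nat.floor (z / H) with hk
  have hdiv0 : 0 ≤ z / H := div_nonneg h0 hH.le
  have h1 : (k : ℝ) ≤ z / H := Nat.floor_le hdiv0
  have h2 : z / H < (k : ℝ) + 1 := Nat.lt_floor_add_one _
  have hkH : (k : ℝ) * H ≤ z := by
    rw [← le_div_iff₀ hH]; exact h1
  have hzk : z < ((k : ℝ) + 1) * H := by
    rw [← div_lt_iff₀ hH]; exact h2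
  have hkm : k ≤ mm := by
    have : (k : ℝ) ≤ (mm : ℝ) := by
      calc (k : ℝ) ≤ z / H := h1
        _ ≤ (mm : ℝ) := by rw [div_le_iff₀ hH]; exact hzT
    exact_mod_cast this
  have hlt : (k : ℝ) * H < z := lt_of_le_of_ne hkH (Ne.symm (hne k hkm))
  have hkmm : k < mm := by
    rcases lt_or_eq_of_le hkm with h | h
    · exact h
    · exfalso; rw [h] at hlt; linarith
  exact ⟨k, hkmm, hlt, hzk⟩

lemma setIntegral_prod_fst {A B : Set ℝ} (hA : MeasurableSet A) (hB : MeasurableSet B)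
    (f : ℝ → ℝ) :
    ∫ p : ℝ × ℝ in A ×ˢ B, f p.1 = (∫ x in A, f x) * (volume B).toReal := by
  have h : (volume : Measure (ℝ × ℝ)).restrict (A ×ˢ B)
      = (volume.restrict A).prod (volume.restrict B) := by
    rw [Measure.volume_eq_prod, Measure.prod_restrict]
  rw [h]
  have h2 := MeasureTheory.integral_prod_mul (μ := volume.restrict A)
    (ν := volume.restrict B) f (fun _ => (1 : ℝ))
  simpa [integral_const, smul_eq_mul, Measure.restrict_apply_univ, measureReal_def] using h2

lemma setIntegral_prod_snd {A B : Set ℝ} (hA : MeasurableSet A) (hB : MeasurableSet B)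
    (f : ℝ → ℝ) :
    ∫ p : ℝ × ℝ in A ×ˢ B, f p.2 = (volume A).toReal * ∫ y in B, f y := by
  have h : (volume : Measure (ℝ × ℝ)).restrict (A ×ˢ B)
      = (volume.restrict A).prod (volume.restrict B) := by
    rw [Measure.volume_eq_prod, Measure.prod_restrict]
  rw [h]
  have h2 := MeasureTheory.integral_prod_mul (μ := volume.restrict A)
    (ν := volume.restrict B) (fun _ => (1 : ℝ)) f
  simpa [integral_const, smul_eq_mul, Measure.restrict_apply_univ, measureReal_def] using h2

/-- `‖∇(u − u^I)‖_{L^1(Ω_s)} ≤ C N⁻¹`, with the gradient of the piecewise bilinear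
interpolant taken rectangle-by-rectangle. -/
theorem grad_interpolation_L1_OmegaS (β C0 : ℝ) (hβ : 0 < β) (hC0 : 0 < C0) :
    ∃ C : ℝ, 0 < C ∧
      ∀ (N : ℕ) (ε lx ly : ℝ) (S E1 E2 E12 u uI : ℝ × ℝ → ℝ),
        ShishkinHyp N ε β lx ly →
        BoundS C0 S → BoundE1 ε β C0 E1 → BoundE2 ε C0 E2 → BoundE12 ε β C0 E12 →
        (∀ p : ℝ × ℝ, u p = S p + E1 p + E2 p + E12 p) →
        IsMeshInterpolant N lx ly u uI →
        ∫ p in OmegaS lx ly,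
            (|pdx (fun q => u q - uI q) p| + |pdy (fun q => u q - uI q) p|)
          ≤ C * (N : ℝ)⁻¹ := by
  refine ⟨24 * C0 + 6 * C0 / β, by positivity, ?_⟩
  intro N ε lx ly S E1 E2 E12 u uI hSh hBS hBE1 hBE2 hBE12 hu hI
  obtain ⟨hN0, hdvd, hε, hεN, hβ2, hlxdef, hlydef, hlx2, hly4⟩ := hSh
  obtain ⟨m, hm⟩ := hdvd
  have hm1 : 1 ≤ m := by omega
  have hN6 : 6 ≤ N := by omega
  have hNr0 : (0:ℝ) < (N:ℝ) := by exact_mod_cast hN0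
  have hNr6 : (6:ℝ) ≤ (N:ℝ) := by exact_mod_cast hN6
  have hN1 : (1:ℝ) ≤ (N:ℝ) := by linarith
  have hσ : 0 < Real.sqrt ε := Real.sqrt_pos.2 hε
  set L := Real.log (N:ℝ) with hL
  have hL0 : 0 < L := Real.log_pos (by linarith)
  set En := Real.exp (-(2.5) * L) with hEn
  have hEn0 : (0:ℝ) ≤ En := (Real.exp_pos _).le
  have hEn1 : En ≤ 1 := Real.exp_le_one_iff.mpr (by nlinarith)
  have hNrL : (N:ℝ) = Real.exp L := (Real.exp_log hNr0).symm
  have hNrinv : ((N:ℝ))⁻¹ = Real.exp (-L) := by rw [hNrL, ← Real.exp_neg]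
  have hEnN : En * (N:ℝ) ≤ ((N:ℝ))⁻¹ := by
    rw [hEn, hNrinv, hNrL, ← Real.exp_add]
    exact Real.exp_le_exp.2 (by nlinarith)
  have hEnN' : En ≤ ((N:ℝ))⁻¹ := le_trans (le_mul_of_one_le_right hEn0 hN1) hEnN
  have hNinv1 : ((N:ℝ))⁻¹ ≤ 1 := by rw [← one_div, div_le_one hNr0]; exact hN1
  have hε1 : ε ≤ 1 := le_trans hεN hNinv1
  have hlx0 : 0 ≤ lx := by
    rw [hlxdef]; exact mul_nonneg (by positivity) hL0.le
  have hly0 : 0 ≤ ly := by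
    rw [hlydef]; exact mul_nonneg (by positivity) hL0.le
  have hlxE : ∀ x : ℝ, x ≤ 1 - lx → Real.exp (-β * (1 - x) / ε) ≤ En := by
    intro x hxle
    rw [hEn]
    apply Real.exp_le_exp.2
    have h2 : β * lx / ε = 2.5 * L := by
      rw [hlxdef]; field_simp
    have h3 : β * lx ≤ β * (1 - x) := by nlinarith
    have h4 : β * lx / ε ≤ β * (1 - x) / ε := by gcongr
    have h5 : -β * (1 - x) / ε = -(β * (1 - x) / ε) := by ring
    rw [h5]; linarith [h2 ▸ h4]
  have hlyE : ∀ y : ℝ, ly ≤ y → Real.exp (-y / Real.sqrt ε) ≤ En := by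
    intro y hyy
    rw [hEn]
    apply Real.exp_le_exp.2
    have h2 : ly / Real.sqrt ε = 2.5 * L := by
      rw [hlydef]; field_simp
    have h4 : ly / Real.sqrt ε ≤ y / Real.sqrt ε := by gcongr
    have h5 : -y / Real.sqrt ε = -(y / Real.sqrt ε) := by ring
    rw [h5]; linarith [h2 ▸ h4]
  have hlyE' : ∀ y : ℝ, y ≤ 1 - ly → Real.exp (-(1 - y) / Real.sqrt ε) ≤ En := by
    intro y hyy
    rw [hEn]
    apply Real.exp_le_exp.2
    have h2 : ly / Real.sqrt ε = 2.5 * L := by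
      rw [hlydef]; field_simp
    have h4 : ly / Real.sqrt ε ≤ (1 - y) / Real.sqrt ε := by gcongr; linarith
    have h5 : -(1 - y) / Real.sqrt ε = -((1 - y) / Real.sqrt ε) := by ring
    rw [h5]; linarith [h2 ▸ h4]
  -- mesh arithmetic
  have hNcast : (N:ℝ) = 6 * (m:ℝ) := by rw [hm]; push_cast; ring
  have hm0 : (0:ℝ) < (m:ℝ) := by exact_mod_cast hm1
  set Hx := (1 - lx) / (3 * (m:ℝ)) with hHxdef
  set Hy := (1 - 2 * ly) / (2 * (m:ℝ)) with hHydef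
  have hHx0 : 0 < Hx := by rw [hHxdef]; apply div_pos (by linarith) (by positivity)
  have hHy0 : 0 < Hy := by rw [hHydef]; apply div_pos (by linarith) (by positivity)
  have hXc : ∀ i : ℕ, i ≤ 3 * m → meshX N lx i = (i:ℝ) * Hx := by
    intro i hi
    rw [meshX, if_pos (by omega : i ≤ N / 2), hNcast, hHxdef]
    field_simp; ring
  have hYc : ∀ j : ℕ, 2 * m ≤ j → j ≤ 4 * m →
      meshY N ly j = ly + ((j:ℝ) - 2 * (m:ℝ)) * Hy := by
    intro j h1 h2
    rcases eq_or_lt_of_le h1 with he | hlt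
    · rw [meshY, if_pos (by omega : j ≤ N / 3), hNcast, hHydef, ← he]
      push_cast
      field_simp
      ring
    · rw [meshY, if_neg (by omega), if_pos (by omega), hNcast, hHydef]
      field_simp; ring
  -- null grid set
  set sZ : Set (ℝ × ℝ) := (⋃ i : ℕ, {p : ℝ × ℝ | p.1 = meshX N lx i})
    ∪ (⋃ j : ℕ, {p : ℝ × ℝ | p.2 = meshY N ly j}) with hsZdef
  have hsZ0 : volume sZ = 0 := by
    rw [hsZdef]
    exact measure_union_null (measure_iUnion_null fun i => volume_vert_line _)
      (measure_iUnion_null fun j => volume_horiz_line _)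
  -- pointwise bound off the grid
  have h3mHx : (3 * (m:ℝ)) * Hx = 1 - lx := by
    rw [hHxdef]; field_simp
  have h2mHy : (2 * (m:ℝ)) * Hy = 1 - 2 * ly := by
    rw [hHydef]; field_simp
  have hptwise : ∀ p : ℝ × ℝ, p ∈ OmegaS lx ly → p ∉ sZ →
      |pdx (fun q => u q - uI q) p| + |pdy (fun q => u q - uI q) p| ≤
        (20 * C0 + 3 * C0 / β) * ((N:ℝ))⁻¹
        + 3 * (C0 * ε⁻¹ * Real.exp (-β * (1 - p.1) / ε))
        + 2 * (C0 * (Real.sqrt ε)⁻¹ *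
            (Real.exp (-p.2 / Real.sqrt ε) + Real.exp (-(1 - p.2) / Real.sqrt ε))) := by
    intro p hpΩ hpZ
    obtain ⟨hp1, hp2⟩ := hpΩ
    have hnx : ∀ i : ℕ, p.1 ≠ meshX N lx i := fun i he =>
      hpZ (Or.inl (Set.mem_iUnion.2 ⟨i, he⟩))
    have hny : ∀ j : ℕ, p.2 ≠ meshY N ly j := fun j he =>
      hpZ (Or.inr (Set.mem_iUnion.2 ⟨j, he⟩))
    obtain ⟨k, hk3m, hkl, hkr⟩ := find_cell hHx0 (mm := 3 * m) hp1.1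
      (by
        have hc : ((3 * m : ℕ) : ℝ) = 3 * (m:ℝ) := by push_cast; ring
        rw [hc, h3mHx]; exact hp1.2)
      (fun i hi he => hnx i (by rw [hXc i hi]; exact he))
    obtain ⟨l, hl2m, hll, hlr⟩ := find_cell hHy0 (mm := 2 * m) (z := p.2 - ly)
      (by linarith [hp2.1])
      (by
        have hc : ((2 * m : ℕ) : ℝ) = 2 * (m:ℝ) := by push_cast; ring
        rw [hc, h2mHy]; linarith [hp2.2])
      (fun j hj he => hny (2 * m + j)
        (by rw [hYc (2 * m + j) (by omega) (by omega)]; push_cast; linarith [he]))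
    have hcast1 : ((k + 1 : ℕ) : ℝ) = (k:ℝ) + 1 := by push_cast; ring
    have hX0n : meshX N lx k = (k:ℝ) * Hx := hXc k (by omega)
    have hX1n : meshX N lx (k + 1) = ((k:ℝ) + 1) * Hx := by
      rw [hXc (k + 1) (by omega), hcast1]
    have hY0n : meshY N ly (2 * m + l) = ly + (l:ℝ) * Hy := by
      rw [hYc _ (by omega) (by omega)]; push_cast; ring
    have hY1n : meshY N ly (2 * m + l + 1) = ly + ((l:ℝ) + 1) * Hy := by
      rw [hYc _ (by omega) (by omega)]; push_cast; ring
    have hbil : IsBilinearOn uI (Icc ((k:ℝ) * Hx) (((k:ℝ) + 1) * Hx)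
        ×ˢ Icc (ly + (l:ℝ) * Hy) (ly + ((l:ℝ) + 1) * Hy)) := by
      have hb := hI.2.1 (k + 1) (2 * m + l + 1) (by omega) (by omega) (by omega) (by omega)
      have hrect : meshRect N lx ly (k + 1) (2 * m + l + 1)
          = Icc ((k:ℝ) * Hx) (((k:ℝ) + 1) * Hx)
            ×ˢ Icc (ly + (l:ℝ) * Hy) (ly + ((l:ℝ) + 1) * Hy) := by
        simp only [meshRect]
        have e1 : k + 1 - 1 = k := by omega
        have e2 : 2 * m + l + 1 - 1 = 2 * m + l := by omega
        rw [e1, e2, hX0n, hX1n, hY0n, hY1n]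
      rwa [hrect] at hb
    have hnod : ∀ X Y : ℝ, (X = (k:ℝ) * Hx ∨ X = ((k:ℝ) + 1) * Hx) →
        (Y = ly + (l:ℝ) * Hy ∨ Y = ly + ((l:ℝ) + 1) * Hy) → uI (X, Y) = u (X, Y) := by
      have hnode := hI.2.2
      rintro X Y (rfl | rfl) (rfl | rfl)
      · rw [← hX0n, ← hY0n]; exact hnode k (2 * m + l) (by omega) (by omega)
      · rw [← hX0n, ← hY1n]; exact hnode k (2 * m + l + 1) (by omega) (by omega)
      · rw [← hX1n, ← hY0n]; exact hnode (k + 1) (2 * m + l) (by omega) (by omega)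
      · rw [← hX1n, ← hY1n]; exact hnode (k + 1) (2 * m + l + 1) (by omega) (by omega)
    have hk3m' : (k:ℝ) + 1 ≤ 3 * (m:ℝ) := by
      have : (k + 1 : ℕ) ≤ 3 * m := hk3m
      exact_mod_cast this
    have hl2m' : (l:ℝ) + 1 ≤ 2 * (m:ℝ) := by
      have : (l + 1 : ℕ) ≤ 2 * m := hl2m
      exact_mod_cast this
    have hX00 : 0 ≤ (k:ℝ) * Hx := by positivity
    have hxlt : (k:ℝ) * Hx < ((k:ℝ) + 1) * Hx := by
      have he : ((k:ℝ) + 1) * Hx - (k:ℝ) * Hx = Hx := by ring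
      linarith only [he, hHx0]
    have hX1le : ((k:ℝ) + 1) * Hx ≤ 1 - lx := by
      rw [← h3mHx]
      exact mul_le_mul_of_nonneg_right hk3m' hHx0.le
    have hY0ge : ly ≤ ly + (l:ℝ) * Hy := by
      have : (0:ℝ) ≤ (l:ℝ) * Hy := by positivity
      linarith
    have hylt : ly + (l:ℝ) * Hy < ly + ((l:ℝ) + 1) * Hy := by
      have he : ((l:ℝ) + 1) * Hy - (l:ℝ) * Hy = Hy := by ring
      linarith only [he, hHy0]
    have hY1le : ly + ((l:ℝ) + 1) * Hy ≤ 1 - ly := by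
      have h := mul_le_mul_of_nonneg_right hl2m' hHy0.le
      linarith only [h, h2mHy]
    have hNinv : ((N:ℝ))⁻¹ = ((6:ℝ) * (m:ℝ))⁻¹ := by rw [hNcast]
    have hHxle : ((k:ℝ) + 1) * Hx - (k:ℝ) * Hx ≤ 2 * ((N:ℝ))⁻¹ := by
      have h1 : ((k:ℝ) + 1) * Hx - (k:ℝ) * Hx = Hx := by ring
      have h2 : (2:ℝ) * ((6:ℝ) * (m:ℝ))⁻¹ = 1 / (3 * (m:ℝ)) := by
        field_simp; ring
      rw [h1, hNinv, h2, hHxdef]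
      gcongr
      linarith
    have hHyle : (ly + ((l:ℝ) + 1) * Hy) - (ly + (l:ℝ) * Hy) ≤ 3 * ((N:ℝ))⁻¹ := by
      have h1 : (ly + ((l:ℝ) + 1) * Hy) - (ly + (l:ℝ) * Hy) = Hy := by ring
      have h2 : (3:ℝ) * ((6:ℝ) * (m:ℝ))⁻¹ = 1 / (2 * (m:ℝ)) := by
        field_simp; ring
      rw [h1, hNinv, h2, hHydef]
      gcongr
      linarith
    have hHxNb : (((k:ℝ) + 1) * Hx - (k:ℝ) * Hx)⁻¹ ≤ (N:ℝ) := by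
      have h1 : ((k:ℝ) + 1) * Hx - (k:ℝ) * Hx = Hx := by ring
      have hge : ((N:ℝ))⁻¹ ≤ Hx := by
        rw [hNinv, hHxdef]
        have h2 : ((6:ℝ) * (m:ℝ))⁻¹ = (1/2) / (3 * (m:ℝ)) := by
          field_simp; ring
        rw [h2]
        gcongr
        linarith
      rw [h1]
      calc Hx⁻¹ ≤ (((N:ℝ))⁻¹)⁻¹ := by
            apply inv_anti₀ (by positivity) hge
        _ = (N:ℝ) := inv_inv _
    have hHyNb : ((ly + ((l:ℝ) + 1) * Hy) - (ly + (l:ℝ) * Hy))⁻¹ ≤ (N:ℝ) := by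
      have h1 : (ly + ((l:ℝ) + 1) * Hy) - (ly + (l:ℝ) * Hy) = Hy := by ring
      have hge : ((N:ℝ))⁻¹ ≤ Hy := by
        rw [hNinv, hHydef]
        have h2 : ((6:ℝ) * (m:ℝ))⁻¹ = ((2:ℝ)/(3:ℝ) * (1/2)) / (2 * (m:ℝ)) := by
          field_simp; ring
        rw [h2]
        gcongr
        linarith
      rw [h1]
      calc Hy⁻¹ ≤ (((N:ℝ))⁻¹)⁻¹ := by
            apply inv_anti₀ (by positivity) hge
        _ = (N:ℝ) := inv_inv _
    have hpIoo : p ∈ Ioo ((k:ℝ) * Hx) (((k:ℝ) + 1) * Hx)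
        ×ˢ Ioo (ly + (l:ℝ) * Hy) (ly + ((l:ℝ) + 1) * Hy) :=
      ⟨⟨hkl, hkr⟩, ⟨by linarith [hll], by linarith [hlr]⟩⟩
    exact cell_bound hβ hC0 hε hBS hBE1 hBE2 hBE12 hu hlx0 hly0 hlxE hlyE hlyE'
      hEn0 hEn1 hEnN hN1 hX00 hxlt hX1le hY0ge hylt hY1le hHxle hHyle hHxNb hHyNb
      hbil hnod hpIoo
  -- integration
  have hΩeq : OmegaS lx ly = Icc (0:ℝ) (1 - lx) ×ˢ Icc ly (1 - ly) := rfl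
  have hΩmeas : MeasurableSet (OmegaS lx ly) := by
    rw [hΩeq]; exact measurableSet_Icc.prod measurableSet_Icc
  have hΩcomp : IsCompact (OmegaS lx ly) := by
    rw [hΩeq]; exact isCompact_Icc.prod isCompact_Icc
  have hexp1c : Continuous fun p : ℝ × ℝ => Real.exp (-β * (1 - p.1) / ε) :=
    (contExpX β ε).comp continuous_fst
  have hexp2c : Continuous fun p : ℝ × ℝ =>
      Real.exp (-p.2 / Real.sqrt ε) + Real.exp (-(1 - p.2) / Real.sqrt ε) :=
    (contExpY (Real.sqrt ε)).comp continuous_snd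
  set F : ℝ × ℝ → ℝ := fun p => (20 * C0 + 3 * C0 / β) * ((N:ℝ))⁻¹
      + 3 * (C0 * ε⁻¹ * Real.exp (-β * (1 - p.1) / ε))
      + 2 * (C0 * (Real.sqrt ε)⁻¹ *
          (Real.exp (-p.2 / Real.sqrt ε) + Real.exp (-(1 - p.2) / Real.sqrt ε)))
    with hFdef
  have hFcont : Continuous F := by
    rw [hFdef]
    exact (continuous_const.add
        (continuous_const.mul (continuous_const.mul hexp1c))).add
      (continuous_const.mul (continuous_const.mul hexp2c))
  have hmeasH : Measurable fun p : ℝ × ℝ =>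
      |pdx (fun q => u q - uI q) p| + |pdy (fun q => u q - uI q) p| := by
    have h1 : Measurable (pdx fun q => u q - uI q) :=
      measurable_fderiv_apply_const ℝ _ (1, 0)
    have h2 : Measurable (pdy fun q => u q - uI q) :=
      measurable_fderiv_apply_const ℝ _ (0, 1)
    exact h1.abs.add h2.abs
  have hFint : IntegrableOn F (OmegaS lx ly) volume :=
    hFcont.continuousOn.integrableOn_compact hΩcomp
  have haeby : ∀ᵐ p ∂(volume.restrict (OmegaS lx ly)),
      |pdx (fun q => u q - uI q) p| + |pdy (fun q => u q - uI q) p| ≤ F p := by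
    have h1 : ∀ᵐ p : ℝ × ℝ ∂volume, p ∉ sZ := by
      rw [ae_iff]
      have he : {a : ℝ × ℝ | ¬ a ∉ sZ} = sZ := by ext a; simp
      rw [he]; exact hsZ0
    have h1r := ae_restrict_of_ae (μ := volume) (s := OmegaS lx ly) h1
    have h2 := ae_restrict_mem (μ := (volume : Measure (ℝ × ℝ))) hΩmeas
    filter_upwards [h1r, h2] with p hz hm'
    exact hptwise p hm' hz
  have hHint : IntegrableOn (fun p : ℝ × ℝ =>
      |pdx (fun q => u q - uI q) p| + |pdy (fun q => u q - uI q) p|)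
      (OmegaS lx ly) volume := by
    apply Integrable.mono' hFint hmeasH.aestronglyMeasurable
    filter_upwards [haeby] with p hp
    rw [Real.norm_eq_abs, abs_of_nonneg (add_nonneg (abs_nonneg _) (abs_nonneg _))]
    exact hp
  have hmono := integral_mono_ae hHint hFint haeby
  refine le_trans hmono ?_
  -- compute/bound ∫ F
  have hvolA : (volume (Icc (0:ℝ) (1 - lx))).toReal = 1 - lx := by
    rw [Real.volume_Icc, ENNReal.toReal_ofReal (by linarith)]; ring
  have hvolB : (volume (Icc ly (1 - ly))).toReal = 1 - 2 * ly := by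
    rw [Real.volume_Icc, ENNReal.toReal_ofReal (by linarith)]; ring
  set c0 : ℝ := (20 * C0 + 3 * C0 / β) * ((N:ℝ))⁻¹ with hc0def
  have hc00 : 0 ≤ c0 := by rw [hc0def]; positivity
  set f1 : ℝ → ℝ := fun x => 3 * (C0 * ε⁻¹ * Real.exp (-β * (1 - x) / ε)) with hf1def
  set f2 : ℝ → ℝ := fun y => 2 * (C0 * (Real.sqrt ε)⁻¹ *
      (Real.exp (-y / Real.sqrt ε) + Real.exp (-(1 - y) / Real.sqrt ε))) with hf2def
  have i0 : IntegrableOn (fun _ : ℝ × ℝ => c0) (OmegaS lx ly) volume :=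
    integrableOn_const hΩcomp.measure_lt_top.ne
  have i1 : IntegrableOn (fun p : ℝ × ℝ => f1 p.1) (OmegaS lx ly) volume := by
    refine Continuous.continuousOn ?_ |>.integrableOn_compact hΩcomp
    rw [hf1def]
    exact continuous_const.mul (continuous_const.mul hexp1c)
  have i2 : IntegrableOn (fun p : ℝ × ℝ => f2 p.2) (OmegaS lx ly) volume := by
    refine Continuous.continuousOn ?_ |>.integrableOn_compact hΩcomp
    rw [hf2def]
    exact continuous_const.mul (continuous_const.mul hexp2c)
  have i01 : IntegrableOn (fun p : ℝ × ℝ => c0 + f1 p.1) (OmegaS lx ly) volume :=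
    i0.add i1
  have hsplitInt : ∫ p in OmegaS lx ly, F p
      = ((∫ _ in OmegaS lx ly, c0) + ∫ p in OmegaS lx ly, f1 p.1)
        + ∫ p in OmegaS lx ly, f2 p.2 := by
    rw [show (∫ p in OmegaS lx ly, F p)
        = ∫ p in OmegaS lx ly, ((c0 + f1 p.1) + f2 p.2) from rfl,
      integral_add i01 i2, integral_add i0 i1]
  rw [hsplitInt]
  -- term 0
  have hvolΩ : (volume (OmegaS lx ly)).toReal ≤ 1 := by
    rw [hΩeq]
    have hprod : volume (Icc (0:ℝ) (1 - lx) ×ˢ Icc ly (1 - ly))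
        = volume (Icc (0:ℝ) (1 - lx)) * volume (Icc ly (1 - ly)) := by
      rw [Measure.volume_eq_prod, Measure.prod_prod]
    rw [hprod, ENNReal.toReal_mul, hvolA, hvolB]
    calc (1 - lx) * (1 - 2 * ly) ≤ 1 * 1 :=
          mul_le_mul (by linarith only [hlx0]) (by linarith only [hly0])
            (by linarith only [hly4]) (by norm_num)
      _ = 1 := by norm_num
  have ht0 : (∫ _ in OmegaS lx ly, c0) ≤ c0 := by
    rw [setIntegral_const, smul_eq_mul]
    calc (volume (OmegaS lx ly)).toReal * c0 ≤ 1 * c0 :=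
          mul_le_mul_of_nonneg_right hvolΩ hc00
      _ = c0 := one_mul _
  -- term 1
  have ht1 : (∫ p in OmegaS lx ly, f1 p.1) ≤ 3 * C0 / β * ((N:ℝ))⁻¹ := by
    rw [hΩeq, setIntegral_prod_fst measurableSet_Icc measurableSet_Icc]
    have hI1 : (∫ x in Icc (0:ℝ) (1 - lx), f1 x)
        = (3 * C0) * (β⁻¹ * Real.exp (-β * (1 - (1 - lx)) / ε)
            - β⁻¹ * Real.exp (-β * (1 - 0) / ε)) := by
      rw [MeasureTheory.integral_Icc_eq_integral_Ioc,
        ← intervalIntegral.integral_of_le (by linarith : (0:ℝ) ≤ 1 - lx)]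
      have he : f1 = fun x => (3 * C0) * (ε⁻¹ * Real.exp (-β * (1 - x) / ε)) := by
        rw [hf1def]; funext x; ring
      rw [he, intervalIntegral.integral_const_mul, expInt1 hε hβ]
    have hb1 : Real.exp (-β * (1 - (1 - lx)) / ε) ≤ En := hlxE (1 - lx) (le_refl _)
    have hb2 : (0:ℝ) ≤ Real.exp (-β * (1 - 0) / ε) := (Real.exp_pos _).le
    have hβi : (0:ℝ) ≤ β⁻¹ := inv_nonneg.2 hβ.le
    have hint1 : (∫ x in Icc (0:ℝ) (1 - lx), f1 x) ≤ 3 * C0 / β * ((N:ℝ))⁻¹ := by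
      rw [hI1]
      have h1 : β⁻¹ * Real.exp (-β * (1 - (1 - lx)) / ε) ≤ β⁻¹ * ((N:ℝ))⁻¹ :=
        mul_le_mul_of_nonneg_left (le_trans hb1 hEnN') hβi
      have h2 : (0:ℝ) ≤ β⁻¹ * Real.exp (-β * (1 - 0) / ε) := mul_nonneg hβi hb2
      calc (3 * C0) * (β⁻¹ * Real.exp (-β * (1 - (1 - lx)) / ε)
            - β⁻¹ * Real.exp (-β * (1 - 0) / ε))
          ≤ (3 * C0) * (β⁻¹ * ((N:ℝ))⁻¹) := by
            apply mul_le_mul_of_nonneg_left (by linarith only [h1, h2]) (by positivity)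
        _ = 3 * C0 / β * ((N:ℝ))⁻¹ := by ring
    calc (∫ x in Icc (0:ℝ) (1 - lx), f1 x) * (volume (Icc ly (1 - ly))).toReal
        ≤ (3 * C0 / β * ((N:ℝ))⁻¹) * 1 := by
          rw [hvolB]
          apply mul_le_mul hint1 (by linarith) (by linarith) (by positivity)
      _ = 3 * C0 / β * ((N:ℝ))⁻¹ := by ring
  -- term 2
  have ht2 : (∫ p in OmegaS lx ly, f2 p.2) ≤ 4 * C0 * ((N:ℝ))⁻¹ := by
    rw [hΩeq, setIntegral_prod_snd measurableSet_Icc measurableSet_Icc]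
    have hI2 : (∫ y in Icc ly (1 - ly), f2 y)
        = (2 * C0) * ((Real.exp (-ly / Real.sqrt ε) - Real.exp (-(1 - ly) / Real.sqrt ε))
            + (Real.exp (-(1 - (1 - ly)) / Real.sqrt ε)
              - Real.exp (-(1 - ly) / Real.sqrt ε))) := by
      rw [MeasureTheory.integral_Icc_eq_integral_Ioc,
        ← intervalIntegral.integral_of_le (by linarith : ly ≤ 1 - ly)]
      have he : f2 = fun y => (2 * C0) * ((Real.sqrt ε)⁻¹ *
          (Real.exp (-y / Real.sqrt ε) + Real.exp (-(1 - y) / Real.sqrt ε))) := by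
        rw [hf2def]; funext y; ring
      rw [he, intervalIntegral.integral_const_mul, expInt2 hσ]
    have hb1 : Real.exp (-ly / Real.sqrt ε) ≤ En := hlyE ly (le_refl _)
    have hb2 : Real.exp (-(1 - (1 - ly)) / Real.sqrt ε) ≤ En := hlyE' (1 - ly) (le_refl _)
    have hb3 : (0:ℝ) ≤ Real.exp (-(1 - ly) / Real.sqrt ε) := (Real.exp_pos _).le
    have hint2 : (∫ y in Icc ly (1 - ly), f2 y) ≤ 4 * C0 * ((N:ℝ))⁻¹ := by
      rw [hI2]
      have h1 : Real.exp (-ly / Real.sqrt ε) ≤ ((N:ℝ))⁻¹ := le_trans hb1 hEnN'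
      have h2 : Real.exp (-(1 - (1 - ly)) / Real.sqrt ε) ≤ ((N:ℝ))⁻¹ := le_trans hb2 hEnN'
      have h3 : (Real.exp (-ly / Real.sqrt ε) - Real.exp (-(1 - ly) / Real.sqrt ε))
          + (Real.exp (-(1 - (1 - ly)) / Real.sqrt ε) - Real.exp (-(1 - ly) / Real.sqrt ε))
          ≤ 2 * ((N:ℝ))⁻¹ := by linarith only [h1, h2, hb3]
      calc (2 * C0) * ((Real.exp (-ly / Real.sqrt ε) - Real.exp (-(1 - ly) / Real.sqrt ε))
            + (Real.exp (-(1 - (1 - ly)) / Real.sqrt ε)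
              - Real.exp (-(1 - ly) / Real.sqrt ε)))
          ≤ (2 * C0) * (2 * ((N:ℝ))⁻¹) :=
            mul_le_mul_of_nonneg_left h3 (by positivity)
        _ = 4 * C0 * ((N:ℝ))⁻¹ := by ring
    have hpos2 : (0:ℝ) ≤ ∫ y in Icc ly (1 - ly), f2 y := by
      apply setIntegral_nonneg measurableSet_Icc
      intro y _
      rw [hf2def]
      positivity
    calc (volume (Icc (0:ℝ) (1 - lx))).toReal * (∫ y in Icc ly (1 - ly), f2 y)
        ≤ 1 * (4 * C0 * ((N:ℝ))⁻¹) := by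
          rw [hvolA]
          apply mul_le_mul (by linarith) hint2 hpos2 (by linarith)
      _ = 4 * C0 * ((N:ℝ))⁻¹ := by ring
  rw [hc0def] at ht0
  have hfin : (20 * C0 + 3 * C0 / β) * ((N:ℝ))⁻¹ + 3 * C0 / β * ((N:ℝ))⁻¹
      + 4 * C0 * ((N:ℝ))⁻¹ = (24 * C0 + 6 * C0 / β) * ((N:ℝ))⁻¹ := by ring
  linarith only [ht0, ht1, ht2, hfin]
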